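/- Let k ≥ 2 and consider the free monoid on {s₁, s₂, s₃} with the degree-lexicographic order induced by s₁ ≻ s₂ ≻ s₃. The set S = {s₁² − e, s₂² − e, s₃² − e, (s₁s₂)^{k−1}s₁ − (s₂s₁)^{k−1}s₂, (s₂s₃)^{k−1}s₂ − (s₃s₂)^{k−1}s₃} is closed under composition (all composition of intersection and inclusion reduce to zero modulo S), hence is a Gröbner–Shirshov basis for the group algebra of W(2k−1). -/

import Mathlib

namespace GSB16

/-- alternating word `x y x y …` of length `n` -/
def alt (x y : Fin 3) : ℕ → List (Fin 3)
  | 0 => []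
  | n+1 => x :: alt y x n

@[simp] lemma alt_zero (x y : Fin 3) : alt x y 0 = [] := rfl
lemma alt_succ (x y : Fin 3) (n : ℕ) : alt x y (n+1) = x :: alt y x n := rfl
lemma alt_two (x y : Fin 3) (n : ℕ) : alt x y (n+2) = x :: y :: alt x y n := rfl

@[simp] lemma alt_length (x y : Fin 3) (n : ℕ) : (alt x y n).length = n := by
  induction n generalizing x y with
  | zero => rfl
  | succ n ih => simp [alt_succ, ih]

lemma alt_ne_nil (x y : Fin 3) (n : ℕ) (hn : 0 < n) : alt x y n ≠ [] := by
  cases n with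
  | zero => omega
  | succ n => simp [alt_succ]

lemma alt_head? (x y : Fin 3) (n : ℕ) (hn : 0 < n) : (alt x y n).head? = some x := by
  cases n with
  | zero => omega
  | succ n => rfl

lemma mem_alt {z x y : Fin 3} {n : ℕ} (h : z ∈ alt x y n) : z = x ∨ z = y := by
  induction n generalizing x y with
  | zero => simp [alt_zero] at h
  | succ n ih =>
    rw [alt_succ, List.mem_cons] at h
    rcases h with h | h
    · exact Or.inl h
    · exact (ih h).symm

lemma self_mem_alt (x y : Fin 3) (n : ℕ) : x ∈ alt x y (n+1) := by
  rw [alt_succ]; exact List.mem_cons_self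

lemma snd_mem_alt (x y : Fin 3) (n : ℕ) : y ∈ alt x y (n+2) := by
  rw [alt_two]; simp

lemma alt_append (x y : Fin 3) (a b : ℕ) :
    alt x y (a + b) = alt x y a ++ (if a % 2 = 0 then alt x y b else alt y x b) := by
  induction a generalizing x y with
  | zero => simp
  | succ a ih =>
    have : a + 1 + b = (a + b) + 1 := by omega
    rw [this, alt_succ, alt_succ, ih y x, List.cons_append]
    rcases Nat.even_or_odd a with ⟨t, ht⟩ | ⟨t, ht⟩
    · have h1 : a % 2 = 0 := by omega
      have h2 : (a+1) % 2 = 1 := by omega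
      simp [h1, h2]
    · have h1 : a % 2 = 1 := by omega
      have h2 : (a+1) % 2 = 0 := by omega
      simp [h1, h2]

lemma alt_append_even (x y : Fin 3) (a b : ℕ) :
    alt x y (2*a + b) = alt x y (2*a) ++ alt x y b := by
  rw [alt_append]; simp [Nat.mul_mod_right]

lemma alt_snoc (x y : Fin 3) (n : ℕ) :
    alt x y (n+1) = alt x y n ++ [if n % 2 = 0 then x else y] := by
  rw [alt_append x y n 1]
  split_ifs <;> rfl

lemma alt_snoc_even (x y : Fin 3) (a : ℕ) :
    alt x y (2*a + 1) = alt x y (2*a) ++ [x] := by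
  rw [alt_snoc]; simp [Nat.mul_mod_right]

lemma alt_snoc_odd (x y : Fin 3) (a : ℕ) :
    alt x y (2*a + 2) = alt x y (2*a+1) ++ [y] := by
  rw [alt_snoc]
  have : (2*a+1) % 2 = 1 := by omega
  simp [this]

lemma alt_getLast? (x y : Fin 3) (n : ℕ) :
    (alt x y (n+1)).getLast? = some (if n % 2 = 0 then x else y) := by
  rw [alt_snoc]; exact List.getLast?_concat

lemma alt_take (x y : Fin 3) (n a : ℕ) : (alt x y n).take a = alt x y (min a n) := by
  induction a generalizing x y n with
  | zero => simp
  | succ a ih =>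
    cases n with
    | zero => simp
    | succ n =>
      rw [alt_succ, List.take_succ_cons, ih, Nat.succ_min_succ, alt_succ]

lemma alt_drop (x y : Fin 3) (n a : ℕ) :
    (alt x y n).drop a = if a % 2 = 0 then alt x y (n - a) else alt y x (n - a) := by
  induction a generalizing x y n with
  | zero => simp
  | succ a ih =>
    cases n with
    | zero => simp [alt_zero]
    | succ n =>
      rw [alt_succ, List.drop_succ_cons, ih]
      have h : n + 1 - (a + 1) = n - a := by omega
      rcases Nat.even_or_odd a with ⟨t, ht⟩ | ⟨t, ht⟩
      · have h1 : a % 2 = 0 := by omega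
        have h2 : (a+1) % 2 = 1 := by omega
        simp [h1, h2, h]
      · have h1 : a % 2 = 1 := by omega
        have h2 : (a+1) % 2 = 0 := by omega
        simp [h1, h2, h]

lemma alt_reverse (x y : Fin 3) (n : ℕ) :
    (alt x y n).reverse = if n % 2 = 0 then alt y x n else alt x y n := by
  induction n generalizing x y with
  | zero => simp
  | succ n ih =>
    rw [alt_succ, List.reverse_cons, ih y x]
    rcases Nat.even_or_odd n with ⟨t, ht⟩ | ⟨t, ht⟩
    · have h1 : n % 2 = 0 := by omega
      rw [if_pos h1, if_neg (by omega : ¬ (n+1) % 2 = 0)]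
      have hs := alt_snoc x y n
      rw [if_pos h1] at hs
      rw [← hs]
      rfl
    · have h1 : n % 2 = 1 := by omega
      rw [if_neg (by omega : ¬ n % 2 = 0), if_pos (by omega : (n+1) % 2 = 0)]
      have hs := alt_snoc y x n
      rw [if_neg (by omega : ¬ n % 2 = 0)] at hs
      rw [← hs]
      try rfl

lemma alt_reverse_odd (x y : Fin 3) (a : ℕ) :
    (alt x y (2*a+1)).reverse = alt x y (2*a+1) := by
  rw [alt_reverse]
  have : (2*a+1) % 2 = 1 := by omega
  simp [this]

lemma alt_inj {x y x' y' : Fin 3} {n : ℕ} (h : alt x y (n+2) = alt x' y' (n+2)) :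
    x = x' ∧ y = y' := by
  rw [alt_two, alt_two] at h
  exact ⟨(List.cons.injEq _ _ _ _ ▸ h).1, by
    have := (List.cons.injEq _ _ _ _ ▸ h).2
    exact ((List.cons.injEq _ _ _ _ ▸ this).1)⟩

/-! ### infix machinery -/

lemma head?_of_prefix {u w : List (Fin 3)} (h : u <+: w) (hu : u ≠ []) :
    w.head? = u.head? := by
  obtain ⟨t, rfl⟩ := h
  exact (List.head?_append_of_ne_nil _ hu)

lemma getLast?_of_suffix {u w : List (Fin 3)} (h : u <:+ w) (hu : u ≠ []) :
    w.getLast? = u.getLast? := by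
  obtain ⟨s, rfl⟩ := h
  exact (List.getLast?_append_of_ne_nil _ hu)

lemma eq_of_infix_length {u w : List (Fin 3)} (h : u <:+: w) (hl : w.length ≤ u.length) :
    u = w := by
  obtain ⟨s, t, rfl⟩ := h
  have hs : s.length = 0 ∧ t.length = 0 := by
    have := congrArg List.length (rfl : s ++ u ++ t = s ++ u ++ t)
    simp only [List.length_append] at hl ⊢
    omega
  obtain ⟨h1, h2⟩ := hs
  rw [List.length_eq_zero_iff] at h1 h2
  simp [h1, h2]

/-- splitting an infix of an append -/
lemma infix_append_split {u x y : List (Fin 3)} (h : u <:+: x ++ y)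
    (hx : ¬ u <:+: x) (hy : ¬ u <:+: y) :
    ∃ u1 u2, u = u1 ++ u2 ∧ u1 ≠ [] ∧ u2 ≠ [] ∧ u1 <:+ x ∧ u2 <+: y := by
  obtain ⟨s, t, hst⟩ := h
  have hlen : s.length + u.length + t.length = x.length + y.length := by
    have := congrArg List.length hst
    simp only [List.length_append] at this
    omega
  by_cases h1 : x.length ≤ s.length
  · exfalso
    apply hy
    have h0 : y = List.drop x.length ((s ++ u) ++ t) := by rw [hst, List.drop_left]
    rw [List.drop_append, List.drop_append] at h0
    rw [Nat.sub_eq_zero_of_le h1, List.drop_zero] at h0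
    exact ⟨List.drop x.length s, List.drop (x.length - (s ++ u).length) t, h0.symm⟩
  · push_neg at h1
    by_cases h2 : s.length + u.length ≤ x.length
    · exfalso
      apply hx
      have h0 : x = List.take x.length ((s ++ u) ++ t) := by rw [hst, List.take_left]
      rw [List.take_append, List.take_append] at h0
      rw [List.take_of_length_le (show s.length ≤ x.length by omega),
        List.take_of_length_le (show u.length ≤ x.length - s.length by omega)] at h0
      exact ⟨s, List.take (x.length - (s ++ u).length) t, h0.symm⟩
    · push_neg at h2
      set a := x.length - s.length with ha
      refine ⟨u.take a, u.drop a, (List.take_append_drop _ _).symm, ?_, ?_, ?_, ?_⟩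
      · intro hnil
        have := congrArg List.length hnil
        simp only [List.length_take, List.length_nil] at this
        omega
      · intro hnil
        have := congrArg List.length hnil
        simp only [List.length_drop, List.length_nil] at this
        omega
      · refine ⟨s, ?_⟩
        have h0 : x = List.take x.length ((s ++ u) ++ t) := by rw [hst, List.take_left]
        rw [List.take_append, List.take_append] at h0
        rw [List.take_of_length_le (show s.length ≤ x.length by omega)] at h0
        have ht0 : x.length - (s ++ u).length = 0 := by simp [List.length_append]; omega
        rw [ht0, List.take_zero, List.append_nil] at h0
        exact h0.symm
      · refine ⟨t, ?_⟩
        have h0 : y = List.drop x.length ((s ++ u) ++ t) := by rw [hst, List.drop_left]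
        rw [List.drop_append, List.drop_append] at h0
        rw [List.drop_eq_nil_of_le (show s.length ≤ x.length by omega), List.nil_append] at h0
        have ht0 : x.length - (s ++ u).length = 0 := by simp [List.length_append]; omega
        rw [ht0, List.drop_zero] at h0
        exact h0.symm

lemma append_eq_double {u1 u2 : List (Fin 3)} {i : Fin 3}
    (h : u1 ++ u2 = [i, i]) (h1 : u1 ≠ []) (h2 : u2 ≠ []) : u1 = [i] ∧ u2 = [i] := by
  cases u1 with
  | nil => exact absurd rfl h1
  | cons a u1' =>
    cases u1' with
    | nil =>
      simp only [List.cons_append, List.nil_append, List.cons.injEq] at h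
      exact ⟨by rw [h.1], h.2⟩
    | cons b u1'' =>
      exfalso
      have := congrArg List.length h
      simp only [List.length_append, List.length_cons, List.length_nil] at this
      have hu2 : u2.length = 0 := by omega
      exact h2 (List.length_eq_zero_iff.mp hu2)

lemma append_eq_alt {u1 u2 : List (Fin 3)} {x y : Fin 3} {n : ℕ}
    (h : u1 ++ u2 = alt x y n) :
    u1 = alt x y u1.length ∧
      u2 = (if u1.length % 2 = 0 then alt x y (n - u1.length) else alt y x (n - u1.length)) := by
  have hlen : u1.length ≤ n := by
    have := congrArg List.length h
    simp at this; omega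
  constructor
  · have h0 : u1 = (alt x y n).take u1.length := by rw [← h, List.take_left]
    conv_lhs => rw [h0]
    rw [alt_take, min_eq_left hlen]
  · have h0 : u2 = (alt x y n).drop u1.length := by rw [← h, List.drop_left]
    conv_lhs => rw [h0]
    rw [alt_drop]

/-! ### the standard-word predicate -/

/-- list of forbidden (leading) words, parameter `c = k - 1` -/
def Fw (c : ℕ) : List (List (Fin 3)) :=
  [[0,0], [1,1], [2,2], alt 0 1 (2*c+1), alt 1 2 (2*c+1)]

def Stdc (c : ℕ) (l : List (Fin 3)) : Prop := ∀ u ∈ Fw c, ¬ u <:+: l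

lemma stdc_nil (c : ℕ) : Stdc c [] := by
  intro u hu hinf
  have h1 : u ≠ [] := by
    fin_cases hu <;> simp [Fw, alt] <;> exact alt_ne_nil _ _ _ (by omega)
  have := hinf.length_le
  simp at this
  exact h1 this

lemma Stdc.infix {c : ℕ} {l w : List (Fin 3)} (h : Stdc c l) (hw : w <:+: l) : Stdc c w :=
  fun u hu hinf => h u hu (hinf.trans hw)

lemma Stdc.suffix {c : ℕ} {l w : List (Fin 3)} (h : Stdc c l) (hw : w <:+ l) : Stdc c w :=
  h.infix hw.isInfix

lemma Stdc.tail {c : ℕ} {l : List (Fin 3)} (h : Stdc c l) : Stdc c l.tail :=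
  h.suffix (List.tail_suffix l)

lemma Stdc.prefix {c : ℕ} {l w : List (Fin 3)} (h : Stdc c l) (hw : w <+: l) : Stdc c w :=
  h.infix hw.isInfix

/-- an infix of an alternating word is alternating (with one of the two phases) -/
lemma infix_alt {u : List (Fin 3)} {x y : Fin 3} {n : ℕ} (h : u <:+: alt x y n) :
    u = alt x y u.length ∨ u = alt y x u.length := by
  obtain ⟨s, t, hst⟩ := h
  have h1 := (append_eq_alt hst).1
  have h2 := (append_eq_alt h1).2
  have hl : (s ++ u).length - s.length = u.length := by simp
  rcases Nat.even_or_odd s.length with ⟨a, ha⟩ | ⟨a, ha⟩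
  · rw [if_pos (by omega), hl] at h2
    exact Or.inl h2
  · rw [if_neg (by omega), hl] at h2
    exact Or.inr h2

lemma not_double_infix_alt {i x y : Fin 3} {n : ℕ} (hxy : x ≠ y) :
    ¬ [i, i] <:+: alt x y n := by
  intro h
  rcases infix_alt h with h' | h'
  · simp only [List.length_cons, List.length_nil] at h'
    rw [show (0:ℕ)+1+1 = 2 from rfl, alt_two] at h'
    simp only [List.cons.injEq] at h'
    exact hxy (h'.1.symm.trans h'.2.1)
  · simp only [List.length_cons, List.length_nil] at h'
    rw [show (0:ℕ)+1+1 = 2 from rfl, alt_two] at h'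
    simp only [List.cons.injEq] at h'
    exact hxy (h'.2.1.symm.trans h'.1)

lemma not_alt_infix_of_lt {a b x y : Fin 3} {m n : ℕ} (h : n < m) :
    ¬ alt a b m <:+: alt x y n := by
  intro hinf
  have := hinf.length_le
  simp at this; omega

lemma not_alt_infix_of_ne {a b x y : Fin 3} {n : ℕ} (hne : ¬ (a = x ∧ b = y)) :
    ¬ alt a b (n+2) <:+: alt x y (n+2) := by
  intro hinf
  have := eq_of_infix_length hinf (by simp)
  exact hne (alt_inj this)

/-- the five forbidden words are not infixes of suitable alternating words -/
lemma stdc_alt_21 {c n : ℕ} (hc : 1 ≤ c) (hn : n ≤ 2*c+1) :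
    ∀ u ∈ Fw c, ¬ u <:+: alt 2 1 n := by
  intro u hu
  fin_cases hu
  · exact not_double_infix_alt (by decide)
  · exact not_double_infix_alt (by decide)
  · exact not_double_infix_alt (by decide)
  · -- alt 0 1 (2c+1)
    rcases Nat.lt_or_ge n (2*c+1) with h' | h'
    · exact not_alt_infix_of_lt h'
    · have hn' : n = 2*c+1 := by omega
      subst hn'
      have h2 : 2*c+1 = (2*c-1)+2 := by omega
      rw [h2]
      exact not_alt_infix_of_ne (by simp)
  · rcases Nat.lt_or_ge n (2*c+1) with h' | h'
    · exact not_alt_infix_of_lt h'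
    · have hn' : n = 2*c+1 := by omega
      subst hn'
      have h2 : 2*c+1 = (2*c-1)+2 := by omega
      rw [h2]
      exact not_alt_infix_of_ne (by simp)

lemma stdc_alt_10 {c n : ℕ} (hc : 1 ≤ c) (hn : n ≤ 2*c+1) :
    ∀ u ∈ Fw c, ¬ u <:+: alt 1 0 n := by
  intro u hu
  fin_cases hu
  · exact not_double_infix_alt (by decide)
  · exact not_double_infix_alt (by decide)
  · exact not_double_infix_alt (by decide)
  · rcases Nat.lt_or_ge n (2*c+1) with h' | h'
    · exact not_alt_infix_of_lt h'
    · have hn' : n = 2*c+1 := by omega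
      subst hn'
      have h2 : 2*c+1 = (2*c-1)+2 := by omega
      rw [h2]
      exact not_alt_infix_of_ne (by simp)
  · rcases Nat.lt_or_ge n (2*c+1) with h' | h'
    · exact not_alt_infix_of_lt h'
    · have hn' : n = 2*c+1 := by omega
      subst hn'
      have h2 : 2*c+1 = (2*c-1)+2 := by omega
      rw [h2]
      exact not_alt_infix_of_ne (by simp)

/-! ### the prepend (normal-form) functions -/

def p2 (l : List (Fin 3)) : List (Fin 3) :=
  if l.head? = some 2 then l.tail else 2 :: l

def p1 (c : ℕ) (l : List (Fin 3)) : List (Fin 3) :=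
  if l.head? = some 1 then l.tail
  else if alt 2 1 (2*c) <+: l then alt 2 1 (2*c) ++ p2 (l.drop (2*c))
  else 1 :: l

def p0 (c : ℕ) (l : List (Fin 3)) : List (Fin 3) :=
  if l.head? = some 0 then l.tail
  else if alt 1 0 (2*c) <+: l then alt 1 0 (2*c) ++ p1 c (l.drop (2*c))
  else 0 :: l

lemma p2_cons (t : List (Fin 3)) : p2 (2 :: t) = t := by simp [p2]

lemma p2_of_ne (l : List (Fin 3)) (h : l.head? ≠ some 2) : p2 l = 2 :: l := by
  simp [p2, h]

lemma head?_of_alt_prefix {x y : Fin 3} {n : ℕ} {l : List (Fin 3)} (hn : 0 < n)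
    (h : alt x y n <+: l) : l.head? = some x := by
  rw [head?_of_prefix h (alt_ne_nil _ _ _ hn), alt_head? _ _ _ hn]

lemma p1_cons (c : ℕ) (t : List (Fin 3)) : p1 c (1 :: t) = t := by simp [p1]

lemma p1_trigger {c : ℕ} (hc : 1 ≤ c) {l : List (Fin 3)} (h : alt 2 1 (2*c) <+: l) :
    p1 c l = alt 2 1 (2*c) ++ p2 (l.drop (2*c)) := by
  have hh : l.head? = some 2 := head?_of_alt_prefix (by omega) h
  rw [p1, if_neg (by rw [hh]; simp), if_pos h]

lemma p1_trigger' {c : ℕ} (hc : 1 ≤ c) (r : List (Fin 3)) :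
    p1 c (alt 2 1 (2*c) ++ r) = alt 2 1 (2*c) ++ p2 r := by
  rw [p1_trigger hc (List.prefix_append _ _)]
  congr 1
  rw [List.drop_left' (alt_length 2 1 (2*c))]

lemma p1_of_ne (c : ℕ) (l : List (Fin 3)) (h1 : l.head? ≠ some 1)
    (h2 : ¬ alt 2 1 (2*c) <+: l) : p1 c l = 1 :: l := by
  rw [p1, if_neg h1, if_neg h2]

lemma p0_cons (c : ℕ) (t : List (Fin 3)) : p0 c (0 :: t) = t := by simp [p0]

lemma p0_trigger {c : ℕ} (hc : 1 ≤ c) {l : List (Fin 3)} (h : alt 1 0 (2*c) <+: l) :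
    p0 c l = alt 1 0 (2*c) ++ p1 c (l.drop (2*c)) := by
  have hh : l.head? = some 1 := head?_of_alt_prefix (by omega) h
  rw [p0, if_neg (by rw [hh]; simp), if_pos h]

lemma p0_trigger' {c : ℕ} (hc : 1 ≤ c) (r : List (Fin 3)) :
    p0 c (alt 1 0 (2*c) ++ r) = alt 1 0 (2*c) ++ p1 c r := by
  rw [p0_trigger hc (List.prefix_append _ _)]
  congr 1
  rw [List.drop_left' (alt_length 1 0 (2*c))]

lemma p0_of_ne (c : ℕ) (l : List (Fin 3)) (h1 : l.head? ≠ some 0)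
    (h2 : ¬ alt 1 0 (2*c) <+: l) : p0 c l = 0 :: l := by
  rw [p0, if_neg h1, if_neg h2]

/-- refuting a trigger: an alternating word of length `< 2c` followed by a
letter not in the pair cannot have the trigger as a prefix. -/
lemma no_alt_prefix {x y : Fin 3} {n L : ℕ} {r : List (Fin 3)} (hL : L < n)
    (hrx : r.head? ≠ some (if L % 2 = 0 then x else y)) :
    ¬ alt x y n <+: alt x y L ++ r := by
  intro h
  have hsplit : alt x y n = alt x y L ++ (if L % 2 = 0 then alt x y (n - L) else alt y x (n - L)) := by
    have := alt_append x y L (n - L)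
    rw [show L + (n - L) = n by omega] at this
    exact this
  rw [hsplit, List.prefix_append_right_inj] at h
  rcases Nat.even_or_odd L with ⟨a, ha⟩ | ⟨a, ha⟩
  · rw [if_pos (by omega)] at h
    have := head?_of_prefix h (alt_ne_nil _ _ _ (by omega))
    rw [alt_head? _ _ _ (by omega)] at this
    rw [if_pos (by omega)] at hrx
    exact hrx this
  · rw [if_neg (by omega)] at h
    have := head?_of_prefix h (alt_ne_nil _ _ _ (by omega))
    rw [alt_head? _ _ _ (by omega)] at this
    rw [if_neg (by omega)] at hrx
    exact hrx this

/-! ### crossing analysis -/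

lemma cross_alt {u1 u2 : List (Fin 3)} {a b : Fin 3} {n : ℕ}
    (h : u1 ++ u2 = alt a b (n+1)) (h1 : u1 ≠ []) (h2 : u2 ≠ []) :
    ∃ m, u1 = alt a b (m+1) ∧ m + 1 < n + 1 ∧
      u1.getLast? = some (if m % 2 = 0 then a else b) ∧
      u2 = (if (m+1) % 2 = 0 then alt a b (n - m) else alt b a (n - m)) ∧
      u2.head? = some (if (m+1) % 2 = 0 then a else b) := by
  obtain ⟨m, hm⟩ : ∃ m, u1.length = m + 1 := by
    cases u1 with
    | nil => exact absurd rfl h1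
    | cons v w => exact ⟨w.length, by simp⟩
  have hap := append_eq_alt h
  have hlen : u1.length + u2.length = n + 1 := by
    have := congrArg List.length h
    simp at this; omega
  have hu2len : 1 ≤ u2.length := by
    cases u2 with
    | nil => exact absurd rfl h2
    | cons v w => simp
  have hlt : m + 1 < n + 1 := by omega
  have hshape1 : u1 = alt a b (m+1) := by rw [← hm]; exact hap.1
  have hshape2 : u2 = (if (m+1) % 2 = 0 then alt a b (n - m) else alt b a (n - m)) := by
    have := hap.2
    rw [hm, show n + 1 - (m+1) = n - m by omega] at this
    exact this
  refine ⟨m, hshape1, hlt, ?_, hshape2, ?_⟩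
  · rw [hshape1, alt_getLast?]
  · rw [hshape2]
    have hnm : 0 < n - m := by omega
    split_ifs with hpar
    · rw [alt_head? _ _ _ hnm]
    · rw [alt_head? _ _ _ hnm]

lemma stdc_no_double {c : ℕ} {x r : List (Fin 3)} {i : Fin 3} (h : Stdc c (x ++ r))
    (hx : x.getLast? = some i) (hr : r.head? = some i) : False := by
  obtain ⟨x', hx'⟩ : ∃ x', x = x' ++ [i] := by
    rcases List.getLast?_eq_some_iff.mp hx with ⟨x', hx'⟩
    exact ⟨x', hx'⟩
  obtain ⟨t, ht⟩ : ∃ t, r = i :: t := by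
    cases r with
    | nil => simp at hr
    | cons v w => simp at hr; exact ⟨w, by rw [hr]⟩
  have hmem : [i, i] ∈ Fw c := by fin_cases i <;> simp [Fw]
  refine h [i,i] hmem ⟨x', t, ?_⟩
  rw [hx', ht]
  simp

/-! ### the five junction lemmas -/

lemma stdA {c : ℕ} (hc : 1 ≤ c) {t : List (Fin 3)} (ht : Stdc c t)
    (h1 : t.head? ≠ some 1) (h2 : t.head? ≠ some 2) :
    Stdc c (alt 2 1 (2*c) ++ t) := by
  intro u hu hinf
  by_cases hux : u <:+: alt 2 1 (2*c)
  · exact stdc_alt_21 hc (by omega) u hu hux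
  by_cases huy : u <:+: t
  · exact ht u hu huy
  obtain ⟨u1, u2, hu12, hn1, hn2, hs, hp⟩ := infix_append_split hinf hux huy
  have hxl : (alt 2 1 (2*c)).getLast? = some 1 := by
    rw [show 2*c = (2*c-1)+1 by omega, alt_getLast?, if_neg (by omega)]
  have hgl := getLast?_of_suffix hs hn1
  have hhd := head?_of_prefix hp hn2
  fin_cases hu
  · obtain ⟨e1, _⟩ := append_eq_double hu12.symm hn1 hn2
    have : (0 : Fin 3) ∈ alt 2 1 (2*c) := hs.subset (by rw [e1]; simp)
    rcases mem_alt this with h' | h' <;> simp at h'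
  · obtain ⟨_, e2⟩ := append_eq_double hu12.symm hn1 hn2
    rw [e2] at hhd; simp at hhd
    exact h1 (by rw [hhd])
  · obtain ⟨e1, _⟩ := append_eq_double hu12.symm hn1 hn2
    rw [e1] at hgl; rw [hxl] at hgl; simp at hgl
  · obtain ⟨m, e1, _, _, _, _⟩ := cross_alt (n := 2*c) hu12.symm hn1 hn2
    have : (0 : Fin 3) ∈ alt 2 1 (2*c) := hs.subset (by rw [e1]; exact self_mem_alt _ _ _)
    rcases mem_alt this with h' | h' <;> simp at h'
  · obtain ⟨m, e1, _, egl, _, ehd⟩ := cross_alt (n := 2*c) hu12.symm hn1 hn2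
    rw [hxl] at hgl
    rw [egl] at hgl
    rcases Nat.even_or_odd m with ⟨j, hj⟩ | ⟨j, hj⟩
    · rw [if_neg (by omega)] at ehd
      rw [ehd] at hhd
      exact h2 hhd
    · rw [if_neg (by omega)] at hgl
      simp at hgl

lemma stdB {c : ℕ} (hc : 1 ≤ c) {t : List (Fin 3)} (ht : Stdc c t)
    (h1 : t.head? ≠ some 1) (h2 : t.head? ≠ some 2) :
    Stdc c (alt 2 1 (2*c+1) ++ t) := by
  intro u hu hinf
  by_cases hux : u <:+: alt 2 1 (2*c+1)
  · exact stdc_alt_21 hc (by omega) u hu hux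
  by_cases huy : u <:+: t
  · exact ht u hu huy
  obtain ⟨u1, u2, hu12, hn1, hn2, hs, hp⟩ := infix_append_split hinf hux huy
  have hxl : (alt 2 1 (2*c+1)).getLast? = some 2 := by
    rw [show 2*c+1 = (2*c)+1 from rfl, alt_getLast?, if_pos (by omega)]
  have hgl := getLast?_of_suffix hs hn1
  have hhd := head?_of_prefix hp hn2
  fin_cases hu
  · obtain ⟨e1, _⟩ := append_eq_double hu12.symm hn1 hn2
    have : (0 : Fin 3) ∈ alt 2 1 (2*c+1) := hs.subset (by rw [e1]; simp)
    rcases mem_alt this with h' | h' <;> simp at h'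
  · obtain ⟨e1, _⟩ := append_eq_double hu12.symm hn1 hn2
    rw [e1] at hgl; rw [hxl] at hgl; simp at hgl
  · obtain ⟨_, e2⟩ := append_eq_double hu12.symm hn1 hn2
    rw [e2] at hhd; simp at hhd
    exact h2 (by rw [hhd])
  · obtain ⟨m, e1, _, _, _, _⟩ := cross_alt (n := 2*c) hu12.symm hn1 hn2
    have : (0 : Fin 3) ∈ alt 2 1 (2*c+1) := hs.subset (by rw [e1]; exact self_mem_alt _ _ _)
    rcases mem_alt this with h' | h' <;> simp at h'
  · obtain ⟨m, e1, _, egl, _, ehd⟩ := cross_alt (n := 2*c) hu12.symm hn1 hn2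
    rw [hxl] at hgl
    rw [egl] at hgl
    rcases Nat.even_or_odd m with ⟨j, hj⟩ | ⟨j, hj⟩
    · rw [if_pos (by omega)] at hgl
      simp at hgl
    · rw [if_pos (by omega)] at ehd
      rw [ehd] at hhd
      exact h1 hhd

lemma stdC {c : ℕ} (hc : 1 ≤ c) {t : List (Fin 3)} (ht : Stdc c t)
    (h0 : t.head? ≠ some 0) (h1 : t.head? ≠ some 1) :
    Stdc c (alt 1 0 (2*c) ++ t) := by
  intro u hu hinf
  by_cases hux : u <:+: alt 1 0 (2*c)
  · exact stdc_alt_10 hc (by omega) u hu hux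
  by_cases huy : u <:+: t
  · exact ht u hu huy
  obtain ⟨u1, u2, hu12, hn1, hn2, hs, hp⟩ := infix_append_split hinf hux huy
  have hxl : (alt 1 0 (2*c)).getLast? = some 0 := by
    rw [show 2*c = (2*c-1)+1 by omega, alt_getLast?, if_neg (by omega)]
  have hgl := getLast?_of_suffix hs hn1
  have hhd := head?_of_prefix hp hn2
  fin_cases hu
  · obtain ⟨_, e2⟩ := append_eq_double hu12.symm hn1 hn2
    rw [e2] at hhd; simp at hhd
    exact h0 (by rw [hhd])
  · obtain ⟨e1, _⟩ := append_eq_double hu12.symm hn1 hn2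
    rw [e1] at hgl; rw [hxl] at hgl; simp at hgl
  · obtain ⟨e1, _⟩ := append_eq_double hu12.symm hn1 hn2
    have : (2 : Fin 3) ∈ alt 1 0 (2*c) := hs.subset (by rw [e1]; simp)
    rcases mem_alt this with h' | h' <;> simp at h'
  · obtain ⟨m, e1, _, egl, _, ehd⟩ := cross_alt (n := 2*c) hu12.symm hn1 hn2
    rw [hxl] at hgl
    rw [egl] at hgl
    rcases Nat.even_or_odd m with ⟨j, hj⟩ | ⟨j, hj⟩
    · rw [if_neg (by omega)] at ehd
      rw [ehd] at hhd
      exact h1 hhd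
    · rw [if_neg (by omega)] at hgl
      simp at hgl
  · obtain ⟨m, e1, _, egl, _, _⟩ := cross_alt (n := 2*c) hu12.symm hn1 hn2
    rcases Nat.eq_zero_or_pos m with hm | hm
    · subst hm
      rw [e1] at hgl
      rw [hxl, alt_getLast?] at hgl
      simp at hgl
    · have : (2 : Fin 3) ∈ alt 1 0 (2*c) := by
        refine hs.subset ?_
        rw [e1, show m + 1 = (m-1) + 2 by omega]
        exact snd_mem_alt _ _ _
      rcases mem_alt this with h' | h' <;> simp at h'

lemma stdD {c : ℕ} (hc : 1 ≤ c) {t : List (Fin 3)} (ht : Stdc c t)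
    (h2 : t.head? = some 2) :
    Stdc c (alt 1 0 (2*c) ++ t) := by
  intro u hu hinf
  by_cases hux : u <:+: alt 1 0 (2*c)
  · exact stdc_alt_10 hc (by omega) u hu hux
  by_cases huy : u <:+: t
  · exact ht u hu huy
  obtain ⟨u1, u2, hu12, hn1, hn2, hs, hp⟩ := infix_append_split hinf hux huy
  have hxl : (alt 1 0 (2*c)).getLast? = some 0 := by
    rw [show 2*c = (2*c-1)+1 by omega, alt_getLast?, if_neg (by omega)]
  have hgl := getLast?_of_suffix hs hn1
  have hhd := head?_of_prefix hp hn2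
  rw [h2] at hhd
  fin_cases hu
  · obtain ⟨_, e2⟩ := append_eq_double hu12.symm hn1 hn2
    rw [e2] at hhd; simp at hhd
  · obtain ⟨_, e2⟩ := append_eq_double hu12.symm hn1 hn2
    rw [e2] at hhd; simp at hhd
  · obtain ⟨e1, _⟩ := append_eq_double hu12.symm hn1 hn2
    have : (2 : Fin 3) ∈ alt 1 0 (2*c) := hs.subset (by rw [e1]; simp)
    rcases mem_alt this with h' | h' <;> simp at h'
  · obtain ⟨m, e1, _, egl, _, ehd⟩ := cross_alt (n := 2*c) hu12.symm hn1 hn2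
    rw [hxl] at hgl
    rw [egl] at hgl
    rw [ehd] at hhd
    rcases Nat.even_or_odd m with ⟨j, hj⟩ | ⟨j, hj⟩
    · rw [if_neg (by omega)] at hhd
      simp at hhd
    · rw [if_neg (by omega)] at hgl
      simp at hgl
  · obtain ⟨m, e1, _, egl, _, _⟩ := cross_alt (n := 2*c) hu12.symm hn1 hn2
    rcases Nat.eq_zero_or_pos m with hm | hm
    · subst hm
      rw [e1] at hgl
      rw [hxl, alt_getLast?] at hgl
      simp at hgl
    · have : (2 : Fin 3) ∈ alt 1 0 (2*c) := by
        refine hs.subset ?_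
        rw [e1, show m + 1 = (m-1) + 2 by omega]
        exact snd_mem_alt _ _ _
      rcases mem_alt this with h' | h' <;> simp at h'

lemma stdE {c : ℕ} (hc : 1 ≤ c) {t : List (Fin 3)} (ht : Stdc c t)
    (h0 : t.head? ≠ some 0) (h1 : t.head? ≠ some 1)
    (htrig : ¬ alt 2 1 (2*c) <+: t) :
    Stdc c (alt 1 0 (2*c+1) ++ t) := by
  intro u hu hinf
  by_cases hux : u <:+: alt 1 0 (2*c+1)
  · exact stdc_alt_10 hc (by omega) u hu hux
  by_cases huy : u <:+: t
  · exact ht u hu huy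
  obtain ⟨u1, u2, hu12, hn1, hn2, hs, hp⟩ := infix_append_split hinf hux huy
  have hxl : (alt 1 0 (2*c+1)).getLast? = some 1 := by
    rw [show 2*c+1 = (2*c)+1 from rfl, alt_getLast?, if_pos (by omega)]
  have hgl := getLast?_of_suffix hs hn1
  have hhd := head?_of_prefix hp hn2
  fin_cases hu
  · obtain ⟨_, e2⟩ := append_eq_double hu12.symm hn1 hn2
    rw [e2] at hhd; simp at hhd
    exact h0 (by rw [hhd])
  · obtain ⟨_, e2⟩ := append_eq_double hu12.symm hn1 hn2
    rw [e2] at hhd; simp at hhd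
    exact h1 (by rw [hhd])
  · obtain ⟨e1, _⟩ := append_eq_double hu12.symm hn1 hn2
    have : (2 : Fin 3) ∈ alt 1 0 (2*c+1) := hs.subset (by rw [e1]; simp)
    rcases mem_alt this with h' | h' <;> simp at h'
  · obtain ⟨m, e1, _, egl, _, ehd⟩ := cross_alt (n := 2*c) hu12.symm hn1 hn2
    rw [hxl] at hgl
    rw [egl] at hgl
    rcases Nat.even_or_odd m with ⟨j, hj⟩ | ⟨j, hj⟩
    · rw [if_pos (by omega)] at hgl
      simp at hgl
    · rw [if_pos (by omega)] at ehd
      rw [ehd] at hhd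
      exact h0 hhd
  · obtain ⟨m, e1, _, egl, eu2, _⟩ := cross_alt (n := 2*c) hu12.symm hn1 hn2
    rcases Nat.eq_zero_or_pos m with hm | hm
    · subst hm
      rw [if_neg (by omega), show 2*c - 0 = 2*c by omega] at eu2
      rw [eu2] at hp
      exact htrig hp
    · have : (2 : Fin 3) ∈ alt 1 0 (2*c+1) := by
        refine hs.subset ?_
        rw [e1, show m + 1 = (m-1) + 2 by omega]
        exact snd_mem_alt _ _ _
      rcases mem_alt this with h' | h' <;> simp at h'

/-! ### standardness preservation -/

lemma stdc_p2 {c : ℕ} (hc : 1 ≤ c) {l : List (Fin 3)} (h : Stdc c l) : Stdc c (p2 l) := by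
  by_cases hh : l.head? = some 2
  · rw [p2, if_pos hh]; exact h.tail
  · rw [p2_of_ne _ hh]
    intro u hu hinf
    rcases List.infix_cons_iff.mp hinf with hpre | hinf'
    · fin_cases hu
      · have := head?_of_prefix hpre (by simp)
        simp at this
      · have := head?_of_prefix hpre (by simp)
        simp at this
      · rw [show ([2,2] : List (Fin 3)) = 2 :: [2] from rfl, List.cons_prefix_cons] at hpre
        exact hh (head?_of_prefix hpre.2 (by simp))
      · have := head?_of_prefix hpre (alt_ne_nil _ _ _ (by omega))
        rw [alt_head? _ _ _ (by omega)] at this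
        simp at this
      · have := head?_of_prefix hpre (alt_ne_nil _ _ _ (by omega))
        rw [alt_head? _ _ _ (by omega)] at this
        simp at this
    · exact h u hu hinf'

lemma stdc_p1 {c : ℕ} (hc : 1 ≤ c) {l : List (Fin 3)} (h : Stdc c l) : Stdc c (p1 c l) := by
  by_cases hh : l.head? = some 1
  · rw [p1, if_pos hh]; exact h.tail
  · by_cases htr : alt 2 1 (2*c) <+: l
    · obtain ⟨rest, hrest⟩ := htr
      have hl : l = alt 2 1 (2*c) ++ rest := hrest.symm
      subst hl
      rw [p1_trigger' hc]
      have hrstd : Stdc c rest := h.suffix (List.suffix_append _ _)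
      have hgl21 : (alt 2 1 (2*c)).getLast? = some 1 := by
        rw [show 2*c = (2*c-1)+1 by omega, alt_getLast?, if_neg (by omega)]
      have hr1 : rest.head? ≠ some 1 := fun h1 => stdc_no_double h hgl21 h1
      by_cases hr2 : rest.head? = some 2
      · obtain ⟨t, ht⟩ : ∃ t, rest = 2 :: t := by
          cases rest with
          | nil => simp at hr2
          | cons v w => simp at hr2; exact ⟨w, by rw [hr2]⟩
        subst ht
        rw [p2_cons]
        -- rewrite l as alt 2 1 (2c+1) ++ t
        have hsn : alt 2 1 (2*c) ++ 2 :: t = alt 2 1 (2*c+1) ++ t := by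
          rw [alt_snoc_even]; simp
        rw [hsn] at h
        have hgl21' : (alt 2 1 (2*c+1)).getLast? = some 2 := by
          rw [show 2*c+1 = (2*c)+1 from rfl, alt_getLast?, if_pos (by omega)]
        have ht2 : t.head? ≠ some 2 := fun h2 => stdc_no_double h hgl21' h2
        have ht1 : t.head? ≠ some 1 := by
          intro h1
          obtain ⟨t', ht'⟩ : ∃ t', t = 1 :: t' := by
            cases t with
            | nil => simp at h1
            | cons v w => simp at h1; exact ⟨w, by rw [h1]⟩
          subst ht'
          have hsn2 : alt 2 1 (2*c+1) ++ 1 :: t' = alt 2 1 (2*c+2) ++ t' := by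
            have e := alt_snoc 2 1 (2*c+1)
            rw [if_neg (by omega : ¬ (2*c+1) % 2 = 0)] at e
            rw [show (2:ℕ)*c+2 = (2*c+1)+1 from rfl, e]
            simp
          rw [hsn2] at h
          have : alt 1 2 (2*c+1) <:+: alt 2 1 (2*c+2) ++ t' := by
            refine ⟨[2], t', ?_⟩
            rw [show (2:ℕ)*c+2 = (2*c+1)+1 from rfl, alt_succ 2 1 (2*c+1)]
            simp
          exact h (alt 1 2 (2*c+1)) (by simp [Fw]) this
        exact stdA hc (h.suffix (List.suffix_append _ _)) ht1 ht2
      · rw [p2_of_ne _ hr2]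
        have hsn : alt 2 1 (2*c) ++ 2 :: rest = alt 2 1 (2*c+1) ++ rest := by
          rw [alt_snoc_even]; simp
        rw [hsn]
        exact stdB hc hrstd hr1 hr2
    · rw [p1_of_ne _ _ hh htr]
      intro u hu hinf
      rcases List.infix_cons_iff.mp hinf with hpre | hinf'
      · fin_cases hu
        · have := head?_of_prefix hpre (by simp)
          simp at this
        · rw [show ([1,1] : List (Fin 3)) = 1 :: [1] from rfl, List.cons_prefix_cons] at hpre
          exact hh (head?_of_prefix hpre.2 (by simp))
        · have := head?_of_prefix hpre (by simp)
          simp at this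
        · have := head?_of_prefix hpre (alt_ne_nil _ _ _ (by omega))
          rw [alt_head? _ _ _ (by omega)] at this
          simp at this
        · rw [show alt 1 2 (2*c+1) = 1 :: alt 2 1 (2*c) from rfl, List.cons_prefix_cons] at hpre
          exact htr hpre.2
      · exact h u hu hinf'

lemma stdc_p0 {c : ℕ} (hc : 1 ≤ c) {l : List (Fin 3)} (h : Stdc c l) : Stdc c (p0 c l) := by
  by_cases hh : l.head? = some 0
  · rw [p0, if_pos hh]; exact h.tail
  · by_cases htr : alt 1 0 (2*c) <+: l
    · obtain ⟨rest, hrest⟩ := htr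
      have hl : l = alt 1 0 (2*c) ++ rest := hrest.symm
      subst hl
      rw [p0_trigger' hc]
      have hrstd : Stdc c rest := h.suffix (List.suffix_append _ _)
      have hgl10 : (alt 1 0 (2*c)).getLast? = some 0 := by
        rw [show 2*c = (2*c-1)+1 by omega, alt_getLast?, if_neg (by omega)]
      have hr0 : rest.head? ≠ some 0 := fun h0 => stdc_no_double h hgl10 h0
      by_cases hr1 : rest.head? = some 1
      · -- p1 rest = rest.tail
        obtain ⟨t, ht⟩ : ∃ t, rest = 1 :: t := by
          cases rest with
          | nil => simp at hr1
          | cons v w => simp at hr1; exact ⟨w, by rw [hr1]⟩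
        subst ht
        rw [p1_cons]
        have hsn : alt 1 0 (2*c) ++ 1 :: t = alt 1 0 (2*c+1) ++ t := by
          rw [alt_snoc_even]; simp
        rw [hsn] at h
        have hgl10' : (alt 1 0 (2*c+1)).getLast? = some 1 := by
          rw [show 2*c+1 = (2*c)+1 from rfl, alt_getLast?, if_pos (by omega)]
        have ht1 : t.head? ≠ some 1 := fun h1 => stdc_no_double h hgl10' h1
        have ht0 : t.head? ≠ some 0 := by
          intro h0
          obtain ⟨t', ht'⟩ : ∃ t', t = 0 :: t' := by
            cases t with
            | nil => simp at h0
            | cons v w => simp at h0; exact ⟨w, by rw [h0]⟩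
          subst ht'
          have hsn2 : alt 1 0 (2*c+1) ++ 0 :: t' = alt 1 0 (2*c+2) ++ t' := by
            have e := alt_snoc 1 0 (2*c+1)
            rw [if_neg (by omega : ¬ (2*c+1) % 2 = 0)] at e
            rw [show (2:ℕ)*c+2 = (2*c+1)+1 from rfl, e]
            simp
          rw [hsn2] at h
          have : alt 0 1 (2*c+1) <:+: alt 1 0 (2*c+2) ++ t' := by
            refine ⟨[1], t', ?_⟩
            rw [show (2:ℕ)*c+2 = (2*c+1)+1 from rfl, alt_succ 1 0 (2*c+1)]
            simp
          exact h (alt 0 1 (2*c+1)) (by simp [Fw]) this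
        exact stdC hc (h.suffix (List.suffix_append _ _)) ht0 ht1
      · by_cases htr2 : alt 2 1 (2*c) <+: rest
        · -- p1 rest is the inner trigger
          have hhead2 : (p1 c rest).head? = some 2 := by
            rw [p1_trigger hc htr2]
            rw [List.head?_append_of_ne_nil _ (alt_ne_nil _ _ _ (by omega))]
            exact alt_head? _ _ _ (by omega)
          exact stdD hc (stdc_p1 hc hrstd) hhead2
        · rw [p1_of_ne _ _ hr1 htr2]
          have hsn : alt 1 0 (2*c) ++ 1 :: rest = alt 1 0 (2*c+1) ++ rest := by
            rw [alt_snoc_even]; simp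
          rw [hsn]
          exact stdE hc hrstd hr0 hr1 htr2
    · rw [p0_of_ne _ _ hh htr]
      intro u hu hinf
      rcases List.infix_cons_iff.mp hinf with hpre | hinf'
      · fin_cases hu
        · rw [show ([0,0] : List (Fin 3)) = 0 :: [0] from rfl, List.cons_prefix_cons] at hpre
          exact hh (head?_of_prefix hpre.2 (by simp))
        · have := head?_of_prefix hpre (by simp)
          simp at this
        · have := head?_of_prefix hpre (by simp)
          simp at this
        · rw [show alt 0 1 (2*c+1) = 0 :: alt 1 0 (2*c) from rfl, List.cons_prefix_cons] at hpre
          exact htr hpre.2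
        · have := head?_of_prefix hpre (alt_ne_nil _ _ _ (by omega))
          rw [alt_head? _ _ _ (by omega)] at this
          simp at this
      · exact h u hu hinf'

/-! ### involutivity on standard words -/

lemma p2_invol {c : ℕ} {l : List (Fin 3)} (h : Stdc c l) : p2 (p2 l) = l := by
  by_cases hh : l.head? = some 2
  · obtain ⟨t, ht⟩ : ∃ t, l = 2 :: t := by
      cases l with
      | nil => simp at hh
      | cons v w => simp at hh; exact ⟨w, by rw [hh]⟩
    subst ht
    rw [p2_cons, p2_of_ne]
    intro h2
    exact stdc_no_double (x := [2]) (r := t) (by simpa using h) (by simp) h2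
  · rw [p2_of_ne _ hh, p2_cons]

lemma p1_invol {c : ℕ} (hc : 1 ≤ c) {l : List (Fin 3)} (h : Stdc c l) : p1 c (p1 c l) = l := by
  by_cases hh : l.head? = some 1
  · obtain ⟨t, ht⟩ : ∃ t, l = 1 :: t := by
      cases l with
      | nil => simp at hh
      | cons v w => simp at hh; exact ⟨w, by rw [hh]⟩
    subst ht
    rw [p1_cons, p1_of_ne]
    · intro h1
      exact stdc_no_double (x := [1]) (r := t) (by simpa using h) (by simp) h1
    · intro htr
      obtain ⟨t', ht'⟩ := htr
      have : alt 1 2 (2*c+1) <:+: (1 : Fin 3) :: t := by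
        refine ⟨[], t', ?_⟩
        rw [show alt 1 2 (2*c+1) = 1 :: alt 2 1 (2*c) from rfl]
        simp [ht']
      exact h (alt 1 2 (2*c+1)) (by simp [Fw]) this
  · by_cases htr : alt 2 1 (2*c) <+: l
    · obtain ⟨rest, hrest⟩ := htr
      have hl : l = alt 2 1 (2*c) ++ rest := hrest.symm
      subst hl
      rw [p1_trigger' hc, p1_trigger' hc]
      rw [p2_invol (h.suffix (List.suffix_append _ _))]
    · rw [p1_of_ne _ _ hh htr, p1_cons]

lemma p0_invol {c : ℕ} (hc : 1 ≤ c) {l : List (Fin 3)} (h : Stdc c l) : p0 c (p0 c l) = l := by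
  by_cases hh : l.head? = some 0
  · obtain ⟨t, ht⟩ : ∃ t, l = 0 :: t := by
      cases l with
      | nil => simp at hh
      | cons v w => simp at hh; exact ⟨w, by rw [hh]⟩
    subst ht
    rw [p0_cons, p0_of_ne]
    · intro h0
      exact stdc_no_double (x := [0]) (r := t) (by simpa using h) (by simp) h0
    · intro htr
      obtain ⟨t', ht'⟩ := htr
      have : alt 0 1 (2*c+1) <:+: (0 : Fin 3) :: t := by
        refine ⟨[], t', ?_⟩
        rw [show alt 0 1 (2*c+1) = 0 :: alt 1 0 (2*c) from rfl]
        simp [ht']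
      exact h (alt 0 1 (2*c+1)) (by simp [Fw]) this
  · by_cases htr : alt 1 0 (2*c) <+: l
    · obtain ⟨rest, hrest⟩ := htr
      have hl : l = alt 1 0 (2*c) ++ rest := hrest.symm
      subst hl
      rw [p0_trigger' hc, p0_trigger' hc]
      rw [p1_invol hc (h.suffix (List.suffix_append _ _))]
    · rw [p0_of_ne _ _ hh htr, p0_cons]

/-! ### group algebra computations -/

section GroupSide

variable {G : Type*} [Group G] (g : Fin 3 → G)

def tog (l : List (Fin 3)) : G := (l.map g).prod

@[simp] lemma tog_nil : tog g [] = 1 := rfl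

lemma tog_cons (i : Fin 3) (l : List (Fin 3)) : tog g (i :: l) = g i * tog g l := by
  simp [tog]

lemma tog_append (l1 l2 : List (Fin 3)) : tog g (l1 ++ l2) = tog g l1 * tog g l2 := by
  simp [tog]

variable (hg : ∀ i, g i * g i = 1)

include hg in
lemma tog_reverse_mul (l : List (Fin 3)) : tog g l.reverse * tog g l = 1 := by
  induction l with
  | nil => simp
  | cons i t ih =>
    rw [List.reverse_cons, tog_append, tog_cons g i t]
    have h1 : tog g [i] = g i := by simp [tog]
    rw [h1, mul_assoc, ← mul_assoc (g i) (g i), hg i, one_mul, ih]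

lemma tog_alt_even (x y : Fin 3) (j : ℕ) : tog g (alt x y (2*j)) = (g x * g y)^j := by
  induction j with
  | zero => simp
  | succ j ih =>
    have : 2*(j+1) = 2*j + 2 := by omega
    rw [this, alt_append_even, tog_append, ih, alt_two, alt_zero]
    rw [pow_succ, tog_cons, tog_cons, tog_nil]
    group

include hg in
lemma braid_swap {x y : Fin 3} {m : ℕ} (hxy : (g x * g y)^m = 1) : (g y * g x)^m = 1 := by
  have hsc : SemiconjBy (g x) (g y * g x) (g x * g y) := by
    unfold SemiconjBy
    rw [← mul_assoc]
  have := (hsc.pow_right m).eq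
  rw [hxy, one_mul] at this
  -- g x * (g y * g x)^m = g x
  calc (g y * g x)^m = (g x * g x) * (g y * g x)^m := by rw [hg x, one_mul]
  _ = g x * (g x * (g y * g x)^m) := by rw [mul_assoc]
  _ = g x * g x := by rw [this]
  _ = 1 := hg x

include hg in
lemma braid_eq {x y : Fin 3} {c : ℕ} (hxy : (g x * g y)^(2*c+1) = 1) :
    tog g (alt x y (2*c+1)) = tog g (alt y x (2*c+1)) := by
  set A := tog g (alt x y (2*c+1)) with hA
  set B := tog g (alt y x (2*c+1)) with hB
  have hAB : A * B = 1 := by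
    rw [hA, hB, ← tog_append]
    have : alt x y (2*c+1) ++ alt y x (2*c+1) = alt x y (2*(2*c+1)) := by
      have := alt_append x y (2*c+1) (2*c+1)
      rw [if_neg (by omega : ¬ (2*c+1) % 2 = 0)] at this
      rw [← this]
      congr 1
      omega
    rw [this, tog_alt_even, hxy]
  have hBB : B * B = 1 := by
    have := tog_reverse_mul g hg (alt y x (2*c+1))
    rwa [alt_reverse_odd] at this
  calc A = A * (B * B) := by rw [hBB, mul_one]
  _ = (A * B) * B := by rw [mul_assoc]
  _ = B := by rw [hAB, one_mul]

lemma tog_p2 (h2 : g 2 * g 2 = 1) (l : List (Fin 3)) : tog g (p2 l) = g 2 * tog g l := by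
  by_cases hh : l.head? = some 2
  · obtain ⟨t, ht⟩ : ∃ t, l = 2 :: t := by
      cases l with
      | nil => simp at hh
      | cons v w => simp at hh; exact ⟨w, by rw [hh]⟩
    subst ht
    rw [p2_cons, tog_cons, ← mul_assoc, h2, one_mul]
  · rw [p2_of_ne _ hh, tog_cons]

lemma tog_p1 {c : ℕ} (hc : 1 ≤ c) (hg : ∀ i, g i * g i = 1)
    (h12 : (g 1 * g 2)^(2*c+1) = 1) (l : List (Fin 3)) :
    tog g (p1 c l) = g 1 * tog g l := by
  by_cases hh : l.head? = some 1
  · obtain ⟨t, ht⟩ : ∃ t, l = 1 :: t := by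
      cases l with
      | nil => simp at hh
      | cons v w => simp at hh; exact ⟨w, by rw [hh]⟩
    subst ht
    rw [p1_cons, tog_cons, ← mul_assoc, hg 1, one_mul]
  · by_cases htr : alt 2 1 (2*c) <+: l
    · obtain ⟨rest, hrest⟩ := htr
      have hl : l = alt 2 1 (2*c) ++ rest := hrest.symm
      subst hl
      rw [p1_trigger' hc, tog_append, tog_p2 g (hg 2), tog_append]
      have hkey : tog g (alt 2 1 (2*c)) * g 2 = g 1 * tog g (alt 2 1 (2*c)) := by
        have e1 : tog g (alt 2 1 (2*c)) * g 2 = tog g (alt 2 1 (2*c+1)) := by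
          rw [alt_snoc_even, tog_append, tog_cons, tog_nil, mul_one]
        have e2 : g 1 * tog g (alt 2 1 (2*c)) = tog g (alt 1 2 (2*c+1)) := by
          rw [show alt 1 2 (2*c+1) = 1 :: alt 2 1 (2*c) from rfl, tog_cons]
        rw [e1, e2]
        exact (braid_eq g hg h12).symm
      rw [← mul_assoc, ← mul_assoc, hkey]
    · rw [p1_of_ne _ _ hh htr, tog_cons]

lemma tog_p0 {c : ℕ} (hc : 1 ≤ c) (hg : ∀ i, g i * g i = 1)
    (h01 : (g 0 * g 1)^(2*c+1) = 1) (h12 : (g 1 * g 2)^(2*c+1) = 1) (l : List (Fin 3)) :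
    tog g (p0 c l) = g 0 * tog g l := by
  by_cases hh : l.head? = some 0
  · obtain ⟨t, ht⟩ : ∃ t, l = 0 :: t := by
      cases l with
      | nil => simp at hh
      | cons v w => simp at hh; exact ⟨w, by rw [hh]⟩
    subst ht
    rw [p0_cons, tog_cons, ← mul_assoc, hg 0, one_mul]
  · by_cases htr : alt 1 0 (2*c) <+: l
    · obtain ⟨rest, hrest⟩ := htr
      have hl : l = alt 1 0 (2*c) ++ rest := hrest.symm
      subst hl
      rw [p0_trigger' hc, tog_append, tog_p1 g hc hg h12, tog_append]
      have hkey : tog g (alt 1 0 (2*c)) * g 1 = g 0 * tog g (alt 1 0 (2*c)) := by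
        have e1 : tog g (alt 1 0 (2*c)) * g 1 = tog g (alt 1 0 (2*c+1)) := by
          rw [alt_snoc_even, tog_append, tog_cons, tog_nil, mul_one]
        have e2 : g 0 * tog g (alt 1 0 (2*c)) = tog g (alt 0 1 (2*c+1)) := by
          rw [show alt 0 1 (2*c+1) = 0 :: alt 1 0 (2*c) from rfl, tog_cons]
        rw [e1, e2]
        exact (braid_eq g hg h01).symm
      rw [← mul_assoc, ← mul_assoc, hkey]
    · rw [p0_of_ne _ _ hh htr, tog_cons]

end GroupSide

/-! ### dynamics: step lemmas for the braid pair (0,1) -/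

lemma not_prefix_head {x y : Fin 3} {n : ℕ} {w : List (Fin 3)} (hn : 0 < n)
    (hw : w.head? ≠ some x) : ¬ alt x y n <+: w :=
  fun h => hw (head?_of_alt_prefix hn h)

lemma head?_alt_append {x y : Fin 3} {n : ℕ} (r : List (Fin 3)) (hn : 0 < n) :
    (alt x y n ++ r).head? = some x := by
  rw [List.head?_append_of_ne_nil _ (alt_ne_nil _ _ _ hn), alt_head? _ _ _ hn]

/-- the basic composite map for the (0,1) braid relation -/
def u01 (c : ℕ) (l : List (Fin 3)) : List (Fin 3) := p0 c (p1 c l)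

section B01

variable {c : ℕ} (hc : 1 ≤ c) {r : List (Fin 3)}
  (hr0 : r.head? ≠ some 0) (hr1 : r.head? ≠ some 1)

include hc in
lemma p1_up {L : ℕ} (hB : L = 0 → (r.head? ≠ some 1 ∧ ¬ alt 2 1 (2*c) <+: r)) :
    p1 c (alt 0 1 L ++ r) = alt 1 0 (L+1) ++ r := by
  cases L with
  | zero =>
    simp only [alt_zero, List.nil_append]
    rw [p1_of_ne _ _ (hB rfl).1 (hB rfl).2]
    rfl
  | succ n =>
    rw [p1_of_ne]
    · rfl
    · rw [head?_alt_append r (by omega)]; simp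
    · exact not_prefix_head (by omega) (by rw [head?_alt_append r (by omega)]; simp)

include hc hr0 hr1 in
lemma stepUp {L : ℕ} (hL : L + 2 ≤ 2*c) (hT : L = 0 → ¬ alt 2 1 (2*c) <+: r) :
    u01 c (alt 0 1 L ++ r) = alt 0 1 (L+2) ++ r := by
  rw [u01, p1_up hc (fun h => ⟨hr1, hT h⟩), p0_of_ne]
  · rfl
  · rw [head?_alt_append r (by omega)]; simp
  · exact no_alt_prefix (by omega) (by split_ifs <;> [exact hr1; exact hr0])

lemma stepDown {L : ℕ} : u01 c (alt 1 0 (L+2) ++ r) = alt 1 0 L ++ r := by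
  rw [u01, show alt 1 0 (L+2) ++ r = 1 :: (alt 0 1 (L+1) ++ r) from rfl, p1_cons,
    show alt 0 1 (L+1) ++ r = 0 :: (alt 1 0 L ++ r) from rfl, p0_cons]

include hc in
lemma stepTopEven : u01 c (alt 0 1 (2*c) ++ r) = alt 1 0 (2*c) ++ r := by
  rw [u01, p1_up hc (fun h => absurd h (by omega))]
  have e : alt 1 0 (2*c+1) ++ r = alt 1 0 (2*c) ++ (1 :: r) := by
    rw [alt_snoc_even]; simp
  rw [e, p0_trigger' hc, p1_cons]

include hc in
lemma stepTopOdd : u01 c (alt 0 1 (2*c-1) ++ r) = alt 1 0 (2*c) ++ p1 c r := by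
  have h1 : p1 c (alt 0 1 (2*c-1) ++ r) = alt 1 0 (2*c) ++ r := by
    have := p1_up (c := c) (r := r) hc (L := 2*c-1) (fun h => absurd h (by omega))
    rw [show 2*c-1+1 = 2*c by omega] at this
    exact this
  rw [u01, h1, p0_trigger' hc]

include hc hr0 hr1 in
lemma stepBottomOdd (hT : ¬ alt 2 1 (2*c) <+: r) :
    u01 c (alt 1 0 1 ++ r) = alt 0 1 1 ++ r := by
  rw [u01, show alt 1 0 1 ++ r = 1 :: r from rfl, p1_cons,
    p0_of_ne _ _ hr0 (not_prefix_head (by omega) hr1)]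
  rfl

include hc in
lemma p1_trigger_head (htr : alt 2 1 (2*c) <+: r) : (p1 c r).head? = some 2 := by
  rw [p1_trigger hc htr, head?_alt_append _ (by omega)]

include hc in
lemma stepR2 (htr : alt 2 1 (2*c) <+: r) : u01 c r = alt 0 1 1 ++ p1 c r := by
  have h2 := p1_trigger_head hc htr
  rw [u01, p0_of_ne _ _ (by rw [h2]; simp)
    (not_prefix_head (by omega) (by rw [h2]; simp))]
  rfl

include hc hr0 hr1 in
lemma iterUp1 : ∀ j L, 1 ≤ L → L + 2*j ≤ 2*c →
    (u01 c)^[j] (alt 0 1 L ++ r) = alt 0 1 (L + 2*j) ++ r := by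
  intro j
  induction j with
  | zero => intro L _ _; simp
  | succ j ih =>
    intro L hL1 hLj
    rw [Function.iterate_succ_apply, stepUp hc hr0 hr1 (by omega) (by omega)]
    have := ih (L+2) (by omega) (by omega)
    rw [this, show L + 2 + 2*j = L + 2*(j+1) by omega]

include hc hr0 hr1 in
lemma iterUp0 (hT : ¬ alt 2 1 (2*c) <+: r) : ∀ j, 2*j ≤ 2*c →
    (u01 c)^[j] r = alt 0 1 (2*j) ++ r := by
  intro j hj
  cases j with
  | zero => simp
  | succ j =>
    rw [Function.iterate_succ_apply]
    have h0 : u01 c r = alt 0 1 2 ++ r := by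
      have := stepUp (c := c) (r := r) hc hr0 hr1 (L := 0) (by omega) (fun _ => hT)
      simpa using this
    rw [h0, iterUp1 hc hr0 hr1 j 2 (by omega) (by omega),
      show 2 + 2*j = 2*(j+1) by omega]

lemma iterDown : ∀ j L, (u01 c)^[j] (alt 1 0 (L + 2*j) ++ r) = alt 1 0 L ++ r := by
  intro j
  induction j with
  | zero => intro L; simp
  | succ j ih =>
    intro L
    rw [Function.iterate_succ_apply, show L + 2*(j+1) = (L + 2*j) + 2 by omega,
      stepDown, ih]


end B01

lemma iterate_split (f : List (Fin 3) → List (Fin 3)) (m n k : ℕ) (h : k = m + n)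
    (x : List (Fin 3)) : f^[k] x = f^[m] (f^[n] x) := by
  rw [h, Function.iterate_add_apply]

section B01b

variable {c : ℕ} (hc : 1 ≤ c) {r : List (Fin 3)}
  (hr0 : r.head? ≠ some 0) (hr1 : r.head? ≠ some 1)

include hc hr0 hr1 in
lemma segEvenR1 (hT : ¬ alt 2 1 (2*c) <+: r) :
    (u01 c)^[c+1] r = alt 1 0 (2*c) ++ r := by
  rw [show c+1 = 1+c by omega, Function.iterate_add_apply,
    iterUp0 hc hr0 hr1 hT c (le_refl _), Function.iterate_one, stepTopEven hc]

include hc hr0 hr1 in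
lemma orbitEven (hT : ¬ alt 2 1 (2*c) <+: r) : (u01 c)^[2*c+1] r = r := by
  rw [show 2*c+1 = c + (c+1) by omega, Function.iterate_add_apply,
    segEvenR1 hc hr0 hr1 hT]
  have := iterDown (c := c) (r := r) c 0
  rw [show 0 + 2*c = 2*c by omega] at this
  simpa using this

include hc hr0 hr1 in
lemma segOddR1 (hT : ¬ alt 2 1 (2*c) <+: r) :
    (u01 c)^[c] (alt 0 1 1 ++ r) = alt 1 0 (2*c+1) ++ r := by
  have h1 : (u01 c)^[c-1] (alt 0 1 1 ++ r) = alt 0 1 (2*c-1) ++ r := by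
    have := iterUp1 hc hr0 hr1 (c-1) 1 (by omega) (by omega)
    rw [show 1 + 2*(c-1) = 2*c-1 by omega] at this
    exact this
  rw [iterate_split (u01 c) 1 (c-1) c (by omega), h1,
    Function.iterate_one, stepTopOdd hc, p1_of_ne _ _ hr1 hT]
  rw [alt_snoc_even]
  simp

include hc hr0 hr1 in
lemma orbitOdd (hT : ¬ alt 2 1 (2*c) <+: r) :
    (u01 c)^[2*c+1] (alt 0 1 1 ++ r) = alt 0 1 1 ++ r := by
  have h2 : (u01 c)^[2*c] (alt 0 1 1 ++ r) = alt 1 0 1 ++ r := by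
    rw [show 2*c = c + c by omega, Function.iterate_add_apply,
      segOddR1 hc hr0 hr1 hT]
    have := iterDown (c := c) (r := r) c 1
    rw [show 1 + 2*c = 2*c+1 by omega] at this
    exact this
  rw [Function.iterate_succ_apply', h2, stepBottomOdd hc hr0 hr1 hT]

include hc hr0 hr1 in
lemma segR2 (htr : alt 2 1 (2*c) <+: r) (hstd : Stdc c r) :
    (u01 c)^[c+1] r = alt 1 0 (2*c) ++ r := by
  have hσh := p1_trigger_head hc htr
  have hσ0 : (p1 c r).head? ≠ some 0 := by rw [hσh]; simp
  have hσ1 : (p1 c r).head? ≠ some 1 := by rw [hσh]; simp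
  have h1 : (u01 c)^[c] r = alt 0 1 (2*c-1) ++ p1 c r := by
    rw [iterate_split (u01 c) (c-1) 1 c (by omega),
      Function.iterate_one, stepR2 hc htr]
    have := iterUp1 hc hσ0 hσ1 (c-1) 1 (by omega) (by omega)
    rw [show 1 + 2*(c-1) = 2*c-1 by omega] at this
    exact this
  rw [show c+1 = 1+c by omega, Function.iterate_add_apply, h1,
    Function.iterate_one, stepTopOdd hc, p1_invol hc hstd]

include hc hr0 hr1 in
lemma orbitR2 (htr : alt 2 1 (2*c) <+: r) (hstd : Stdc c r) :
    (u01 c)^[2*c+1] r = r := by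
  rw [show 2*c+1 = c + (c+1) by omega, Function.iterate_add_apply,
    segR2 hc hr0 hr1 htr hstd]
  have := iterDown (c := c) (r := r) c 0
  rw [show 0 + 2*c = 2*c by omega] at this
  simpa using this

end B01b

lemma fix_of_reach {f : List (Fin 3) → List (Fin 3)} {b l : List (Fin 3)} {M j : ℕ}
    (hb : f^[M] b = b) (hl : l = f^[j] b) : f^[M] l = l := by
  rw [hl, ← Function.iterate_add_apply, Nat.add_comm, Function.iterate_add_apply, hb]

/-! ### decomposition of a standard word -/

lemma eq_alt_of {w : List (Fin 3)} {x y : Fin 3} (hmem : ∀ z ∈ w, z = x ∨ z = y)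
    (hxx : ¬ [x,x] <:+: w) (hyy : ¬ [y,y] <:+: w) :
    w = alt x y w.length ∨ w = alt y x w.length := by
  induction w with
  | nil => left; rfl
  | cons z t ih =>
    have hmem' : ∀ v ∈ t, v = x ∨ v = y := fun v hv => hmem v (List.mem_cons_of_mem _ hv)
    have hxx' : ¬ [x,x] <:+: t := fun h' => hxx (List.infix_cons_iff.mpr (Or.inr h'))
    have hyy' : ¬ [y,y] <:+: t := fun h' => hyy (List.infix_cons_iff.mpr (Or.inr h'))
    rcases hmem z List.mem_cons_self with hz | hz <;> subst hz
    · rcases ih hmem' hxx' hyy' with ht | ht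
      · cases t with
        | nil => left; rfl
        | cons v t' =>
          exfalso
          have hv : v = z := by
            rw [List.length_cons, alt_succ] at ht
            exact (List.cons.injEq _ _ _ _ ▸ ht).1
          subst hv
          exact hxx ⟨[], t', rfl⟩
      · left
        rw [List.length_cons, alt_succ, ← ht]
    · rcases ih hmem' hxx' hyy' with ht | ht
      · right
        rw [List.length_cons, alt_succ, ← ht]
      · cases t with
        | nil => right; rfl
        | cons v t' =>
          exfalso
          have hv : v = z := by
            rw [List.length_cons, alt_succ] at ht
            exact (List.cons.injEq _ _ _ _ ▸ ht).1
          subst hv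
          exact hyy ⟨[], t', rfl⟩

lemma dropWhile_head_false {p : Fin 3 → Bool} (l : List (Fin 3)) :
    (l.dropWhile p).head? = none ∨
      ∃ v, (l.dropWhile p).head? = some v ∧ p v = false := by
  induction l with
  | nil => left; rfl
  | cons a t ih =>
    rw [List.dropWhile_cons]
    by_cases hp : p a
    · simpa [hp] using ih
    · right
      exact ⟨a, by simp [hp], by simpa using hp⟩

lemma decomp_pair {c : ℕ} {l : List (Fin 3)} (h : Stdc c l) (z0 x y : Fin 3)
    (hx : x ≠ z0) (hy : y ≠ z0)
    (hxy : ∀ v : Fin 3, v ≠ z0 → v = x ∨ v = y)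
    (hxx : [x,x] ∈ Fw c) (hyy : [y,y] ∈ Fw c) :
    ∃ (a r : List (Fin 3)), a ++ r = l ∧
      r.head? ≠ some x ∧ r.head? ≠ some y ∧ Stdc c r ∧
      (a = alt x y a.length ∨ a = alt y x a.length) := by
  have hpre : l.takeWhile (fun z => decide (z ≠ z0)) <+: l := List.takeWhile_prefix _
  have hsuf : l.dropWhile (fun z => decide (z ≠ z0)) <:+ l := List.dropWhile_suffix _
  refine ⟨_, _, List.takeWhile_append_dropWhile, ?_, ?_, h.suffix hsuf, ?_⟩
  · rcases dropWhile_head_false (p := fun z => decide (z ≠ z0)) l with h' | ⟨v, hv, hv2⟩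
    · rw [h']; simp
    · simp only [decide_eq_false_iff_not, not_not] at hv2
      subst hv2
      rw [hv]
      intro hcon
      exact hx (Option.some.inj hcon).symm
  · rcases dropWhile_head_false (p := fun z => decide (z ≠ z0)) l with h' | ⟨v, hv, hv2⟩
    · rw [h']; simp
    · simp only [decide_eq_false_iff_not, not_not] at hv2
      subst hv2
      rw [hv]
      intro hcon
      exact hy (Option.some.inj hcon).symm
  · apply eq_alt_of
    · intro z hz
      have := List.mem_takeWhile_imp hz
      simp only [decide_eq_true_eq] at this
      exact hxy z this
    · exact fun hcon => h _ hxx (hcon.trans hpre.isInfix)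
    · exact fun hcon => h _ hyy (hcon.trans hpre.isInfix)

lemma alt_len_le_fst {c : ℕ} {x y : Fin 3} {a r : List (Fin 3)}
    (hmem : alt x y (2*c+1) ∈ Fw c) (h : Stdc c (a ++ r))
    (hA : a = alt x y a.length) : a.length ≤ 2*c := by
  by_contra hcon
  push_neg at hcon
  apply h (alt x y (2*c+1)) hmem
  have ht : a.take (2*c+1) = alt x y (2*c+1) := by
    conv_lhs => rw [hA]
    rw [alt_take, min_eq_left (by omega)]
  have hp : alt x y (2*c+1) <+: a := ht ▸ List.take_prefix _ _
  exact (hp.trans (List.prefix_append a r)).isInfix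

lemma alt_len_le_snd {c : ℕ} {x y : Fin 3} {a r : List (Fin 3)}
    (hmem : alt y x (2*c+1) ∈ Fw c) (h : Stdc c (a ++ r))
    (hA : a = alt x y a.length) : a.length ≤ 2*c+1 := by
  by_contra hcon
  push_neg at hcon
  apply h (alt y x (2*c+1)) hmem
  have hd : a.drop 1 = alt y x (a.length - 1) := by
    conv_lhs => rw [hA]
    rw [alt_drop, if_neg (by omega)]
  have ht : (a.drop 1).take (2*c+1) = alt y x (2*c+1) := by
    rw [hd, alt_take, min_eq_left (by omega)]
  have hp : alt y x (2*c+1) <+: a.drop 1 := ht ▸ List.take_prefix _ _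
  have h1 : alt y x (2*c+1) <:+: a := hp.isInfix.trans (List.drop_suffix _ _).isInfix
  exact h1.trans (List.prefix_append a r).isInfix

lemma J_contra {c : ℕ} {w r t : List (Fin 3)} (h : Stdc c ((w ++ [1]) ++ r))
    (hr : r = alt 2 1 (2*c) ++ t) : False := by
  apply h (alt 1 2 (2*c+1)) (by simp [Fw])
  refine ⟨w, t, ?_⟩
  rw [hr, show alt 1 2 (2*c+1) = 1 :: alt 2 1 (2*c) from rfl]
  simp

theorem braid01 {c : ℕ} (hc : 1 ≤ c) {l : List (Fin 3)} (h : Stdc c l) :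
    (u01 c)^[2*c+1] l = l := by
  obtain ⟨a, r, hl, hr0, hr1, hrstd, hA⟩ := decomp_pair h 2 0 1 (by decide) (by decide)
    (by decide) (by simp [Fw]) (by simp [Fw])
  subst hl
  by_cases hT : alt 2 1 (2*c) <+: r
  · obtain ⟨t, ht⟩ := hT
    rcases hA with hA | hA
    · have hbound := alt_len_le_fst (by simp [Fw]) h hA
      rcases Nat.even_or_odd a.length with ⟨j, hj⟩ | ⟨j, hj⟩
      · rcases Nat.eq_zero_or_pos j with hj0 | hjpos
        · have ha : a = [] := List.length_eq_zero_iff.mp (by omega)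
          rw [ha, List.nil_append]
          exact orbitR2 hc hr0 hr1 ⟨t, ht⟩ hrstd
        · exfalso
          have hA2 : a = (alt 0 1 (2*(j-1)+1) ++ [1]) := by
            rw [hA, hj, show j + j = 2*(j-1)+2 by omega, alt_snoc_odd]
          rw [hA2] at h
          exact J_contra h ht.symm
      · have hσstd : Stdc c (p1 c r) := stdc_p1 hc hrstd
        have hσtr : alt 2 1 (2*c) <+: p1 c r := by
          rw [p1_trigger hc ⟨t, ht⟩]; exact List.prefix_append _ _
        have hσh := p1_trigger_head hc ⟨t, ht⟩
        have hσ0 : (p1 c r).head? ≠ some 0 := by rw [hσh]; simp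
        have hσ1 : (p1 c r).head? ≠ some 1 := by rw [hσh]; simp
        have hb := orbitR2 hc hσ0 hσ1 hσtr hσstd
        apply fix_of_reach hb (j := j + 1)
        rw [Function.iterate_succ_apply, stepR2 hc hσtr, p1_invol hc hrstd,
          iterUp1 hc hr0 hr1 j 1 (by omega) (by omega)]
        rw [hA, hj, show 2*j+1 = 1+2*j by omega]
    · have hbound := alt_len_le_snd (by simp [Fw]) h hA
      rcases Nat.even_or_odd a.length with ⟨j, hj⟩ | ⟨j, hj⟩
      · have hb := orbitR2 hc hr0 hr1 ⟨t, ht⟩ hrstd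
        apply fix_of_reach hb (j := (c+1) + (c - j))
        rw [iterate_split (u01 c) (c-j) (c+1) ((c+1)+(c-j)) (by omega),
          segR2 hc hr0 hr1 ⟨t, ht⟩ hrstd]
        have hd := iterDown (c := c) (r := r) (c - j) (2*j)
        rw [show 2*j + 2*(c - j) = 2*c by omega] at hd
        rw [hd, hA, hj, show j + j = 2*j by omega]
      · exfalso
        have hA2 : a = (alt 1 0 (2*j) ++ [1]) := by
          rw [hA, hj, alt_snoc_even]
        rw [hA2] at h
        exact J_contra h ht.symm
  · rcases hA with hA | hA
    · have hbound := alt_len_le_fst (by simp [Fw]) h hA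
      rcases Nat.even_or_odd a.length with ⟨j, hj⟩ | ⟨j, hj⟩
      · apply fix_of_reach (orbitEven hc hr0 hr1 hT) (j := j)
        rw [iterUp0 hc hr0 hr1 hT j (by omega), hA, hj, show j + j = 2*j by omega]
      · apply fix_of_reach (orbitOdd hc hr0 hr1 hT) (j := j)
        rw [iterUp1 hc hr0 hr1 j 1 (by omega) (by omega), hA, hj,
          show 2*j+1 = 1+2*j by omega]
    · have hbound := alt_len_le_snd (by simp [Fw]) h hA
      rcases Nat.even_or_odd a.length with ⟨j, hj⟩ | ⟨j, hj⟩
      · apply fix_of_reach (orbitEven hc hr0 hr1 hT) (j := (c+1)+(c-j))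
        rw [iterate_split (u01 c) (c-j) (c+1) ((c+1)+(c-j)) (by omega),
          segEvenR1 hc hr0 hr1 hT]
        have hd := iterDown (c := c) (r := r) (c - j) (2*j)
        rw [show 2*j + 2*(c-j) = 2*c by omega] at hd
        rw [hd, hA, hj, show j + j = 2*j by omega]
      · apply fix_of_reach (orbitOdd hc hr0 hr1 hT) (j := c + (c-j))
        rw [iterate_split (u01 c) (c-j) c (c+(c-j)) (by omega),
          segOddR1 hc hr0 hr1 hT]
        have hd := iterDown (c := c) (r := r) (c - j) (2*j+1)
        rw [show 2*j+1 + 2*(c-j) = 2*c+1 by omega] at hd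
        rw [hd, hA, hj]

/-! ### dynamics for the braid pair (1,2) -/

def u12 (c : ℕ) (l : List (Fin 3)) : List (Fin 3) := p1 c (p2 l)

section B12

variable {c : ℕ} (hc : 1 ≤ c) {r : List (Fin 3)}
  (hr1 : r.head? ≠ some 1) (hr2 : r.head? ≠ some 2)

lemma p2_up {L : ℕ} (hB : L = 0 → r.head? ≠ some 2) :
    p2 (alt 1 2 L ++ r) = alt 2 1 (L+1) ++ r := by
  cases L with
  | zero =>
    simp only [alt_zero, List.nil_append]
    rw [p2_of_ne _ (hB rfl)]
    rfl
  | succ n =>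
    rw [p2_of_ne]
    · rfl
    · rw [head?_alt_append r (by omega)]; simp

include hc hr1 hr2 in
lemma stepUp12 {L : ℕ} (hL : L + 2 ≤ 2*c) :
    u12 c (alt 1 2 L ++ r) = alt 1 2 (L+2) ++ r := by
  rw [u12, p2_up (fun _ => hr2), p1_of_ne]
  · rfl
  · rw [head?_alt_append r (by omega)]; simp
  · exact no_alt_prefix (by omega) (by split_ifs <;> [exact hr2; exact hr1])

lemma stepDown12 {L : ℕ} : u12 c (alt 2 1 (L+2) ++ r) = alt 2 1 L ++ r := by
  rw [u12, show alt 2 1 (L+2) ++ r = 2 :: (alt 1 2 (L+1) ++ r) from rfl, p2_cons,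
    show alt 1 2 (L+1) ++ r = 1 :: (alt 2 1 L ++ r) from rfl, p1_cons]

include hc in
lemma stepTopEven12 : u12 c (alt 1 2 (2*c) ++ r) = alt 2 1 (2*c) ++ r := by
  rw [u12, p2_up (fun h => absurd h (by omega))]
  have e : alt 2 1 (2*c+1) ++ r = alt 2 1 (2*c) ++ (2 :: r) := by
    rw [alt_snoc_even]; simp
  rw [e, p1_trigger' hc, p2_cons]

include hc in
lemma stepTopOdd12 : u12 c (alt 1 2 (2*c-1) ++ r) = alt 2 1 (2*c) ++ p2 r := by
  have h1 : p2 (alt 1 2 (2*c-1) ++ r) = alt 2 1 (2*c) ++ r := by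
    have := p2_up (r := r) (L := 2*c-1) (fun h => absurd h (by omega))
    rw [show 2*c-1+1 = 2*c by omega] at this
    exact this
  rw [u12, h1, p1_trigger' hc]

include hc hr1 hr2 in
lemma stepBottomOdd12 : u12 c (alt 2 1 1 ++ r) = alt 1 2 1 ++ r := by
  rw [u12, show alt 2 1 1 ++ r = 2 :: r from rfl, p2_cons,
    p1_of_ne _ _ hr1 (not_prefix_head (by omega) hr2)]
  rfl

include hc hr1 hr2 in
lemma iterUp12_1 : ∀ j L, 1 ≤ L → L + 2*j ≤ 2*c →
    (u12 c)^[j] (alt 1 2 L ++ r) = alt 1 2 (L + 2*j) ++ r := by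
  intro j
  induction j with
  | zero => intro L _ _; simp
  | succ j ih =>
    intro L hL1 hLj
    rw [Function.iterate_succ_apply, stepUp12 hc hr1 hr2 (by omega)]
    rw [ih (L+2) (by omega) (by omega), show L + 2 + 2*j = L + 2*(j+1) by omega]

include hc hr1 hr2 in
lemma iterUp12_0 : ∀ j, 2*j ≤ 2*c → (u12 c)^[j] r = alt 1 2 (2*j) ++ r := by
  intro j hj
  cases j with
  | zero => simp
  | succ j =>
    rw [Function.iterate_succ_apply]
    have h0 : u12 c r = alt 1 2 2 ++ r := by
      have := stepUp12 (c := c) (r := r) hc hr1 hr2 (L := 0) (by omega)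
      simpa using this
    rw [h0, iterUp12_1 hc hr1 hr2 j 2 (by omega) (by omega),
      show 2 + 2*j = 2*(j+1) by omega]

lemma iterDown12 : ∀ j L, (u12 c)^[j] (alt 2 1 (L + 2*j) ++ r) = alt 2 1 L ++ r := by
  intro j
  induction j with
  | zero => intro L; simp
  | succ j ih =>
    intro L
    rw [Function.iterate_succ_apply, show L + 2*(j+1) = (L + 2*j) + 2 by omega,
      stepDown12, ih]

include hc hr1 hr2 in
lemma segEven12 : (u12 c)^[c+1] r = alt 2 1 (2*c) ++ r := by
  rw [show c+1 = 1+c by omega, Function.iterate_add_apply,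
    iterUp12_0 hc hr1 hr2 c (le_refl _), Function.iterate_one, stepTopEven12 hc]

include hc hr1 hr2 in
lemma orbitEven12 : (u12 c)^[2*c+1] r = r := by
  rw [show 2*c+1 = c + (c+1) by omega, Function.iterate_add_apply,
    segEven12 hc hr1 hr2]
  have := iterDown12 (c := c) (r := r) c 0
  rw [show 0 + 2*c = 2*c by omega] at this
  simpa using this

include hc hr1 hr2 in
lemma segOdd12 : (u12 c)^[c] (alt 1 2 1 ++ r) = alt 2 1 (2*c+1) ++ r := by
  have h1 : (u12 c)^[c-1] (alt 1 2 1 ++ r) = alt 1 2 (2*c-1) ++ r := by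
    have := iterUp12_1 hc hr1 hr2 (c-1) 1 (by omega) (by omega)
    rw [show 1 + 2*(c-1) = 2*c-1 by omega] at this
    exact this
  rw [iterate_split (u12 c) 1 (c-1) c (by omega), h1,
    Function.iterate_one, stepTopOdd12 hc, p2_of_ne _ hr2]
  rw [alt_snoc_even]
  simp

include hc hr1 hr2 in
lemma orbitOdd12 : (u12 c)^[2*c+1] (alt 1 2 1 ++ r) = alt 1 2 1 ++ r := by
  have h2 : (u12 c)^[2*c] (alt 1 2 1 ++ r) = alt 2 1 1 ++ r := by
    rw [show 2*c = c + c by omega, Function.iterate_add_apply,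
      segOdd12 hc hr1 hr2]
    have := iterDown12 (c := c) (r := r) c 1
    rw [show 1 + 2*c = 2*c+1 by omega] at this
    exact this
  rw [Function.iterate_succ_apply', h2, stepBottomOdd12 hc hr1 hr2]

end B12

theorem braid12 {c : ℕ} (hc : 1 ≤ c) {l : List (Fin 3)} (h : Stdc c l) :
    (u12 c)^[2*c+1] l = l := by
  obtain ⟨a, r, hl, hr1, hr2, hrstd, hA⟩ := decomp_pair h 0 1 2 (by decide) (by decide)
    (by decide) (by simp [Fw]) (by simp [Fw])
  subst hl
  rcases hA with hA | hA
  · have hbound := alt_len_le_fst (by simp [Fw]) h hA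
    rcases Nat.even_or_odd a.length with ⟨j, hj⟩ | ⟨j, hj⟩
    · apply fix_of_reach (orbitEven12 hc hr1 hr2) (j := j)
      rw [iterUp12_0 hc hr1 hr2 j (by omega), hA, hj, show j + j = 2*j by omega]
    · apply fix_of_reach (orbitOdd12 hc hr1 hr2) (j := j)
      rw [iterUp12_1 hc hr1 hr2 j 1 (by omega) (by omega), hA, hj,
        show 2*j+1 = 1+2*j by omega]
  · have hbound := alt_len_le_snd (by simp [Fw]) h hA
    rcases Nat.even_or_odd a.length with ⟨j, hj⟩ | ⟨j, hj⟩
    · apply fix_of_reach (orbitEven12 hc hr1 hr2) (j := (c+1)+(c-j))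
      rw [iterate_split (u12 c) (c-j) (c+1) ((c+1)+(c-j)) (by omega),
        segEven12 hc hr1 hr2]
      have hd := iterDown12 (c := c) (r := r) (c - j) (2*j)
      rw [show 2*j + 2*(c-j) = 2*c by omega] at hd
      rw [hd, hA, hj, show j + j = 2*j by omega]
    · apply fix_of_reach (orbitOdd12 hc hr1 hr2) (j := c + (c-j))
      rw [iterate_split (u12 c) (c-j) c (c+(c-j)) (by omega),
        segOdd12 hc hr1 hr2]
      have hd := iterDown12 (c := c) (r := r) (c - j) (2*j+1)
      rw [show 2*j+1 + 2*(c-j) = 2*c+1 by omega] at hd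
      rw [hd, hA, hj]

/-! ### assembly -/

def pp (c : ℕ) : Fin 3 → (List (Fin 3) → List (Fin 3)) := ![p0 c, p1 c, p2]

lemma pp_zero (c : ℕ) : pp c 0 = p0 c := rfl
lemma pp_one (c : ℕ) : pp c 1 = p1 c := rfl
lemma pp_two (c : ℕ) : pp c 2 = p2 := rfl

lemma stdc_pp {c : ℕ} (hc : 1 ≤ c) (i : Fin 3) {l : List (Fin 3)} (h : Stdc c l) :
    Stdc c (pp c i l) := by
  fin_cases i
  · exact stdc_p0 hc h
  · exact stdc_p1 hc h
  · exact stdc_p2 hc h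

lemma pp_invol {c : ℕ} (hc : 1 ≤ c) (i : Fin 3) {l : List (Fin 3)} (h : Stdc c l) :
    pp c i (pp c i l) = l := by
  fin_cases i
  · exact p0_invol hc h
  · exact p1_invol hc h
  · exact p2_invol h

lemma pp_cons {c : ℕ} (hc : 1 ≤ c) (i : Fin 3) {t : List (Fin 3)}
    (h : Stdc c (i :: t)) : pp c i t = i :: t := by
  have hhd : ∀ (v : Fin 3), t.head? = some v → v ≠ i := by
    intro v hv hvi
    subst hvi
    obtain ⟨t', ht'⟩ : ∃ t', t = v :: t' := by
      cases t with
      | nil => simp at hv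
      | cons a w => simp at hv; exact ⟨w, by rw [hv]⟩
    subst ht'
    exact h [v, v] (by fin_cases v <;> simp [Fw]) ⟨[], t', rfl⟩
  fin_cases i
  · show pp c 0 t = (0 : Fin 3) :: t
    rw [pp_zero, p0_of_ne]
    · intro hcon; exact hhd 0 hcon rfl
    · intro hcon
      exact h (alt 0 1 (2*c+1)) (by simp [Fw])
        ((show alt 0 1 (2*c+1) <+: (0 : Fin 3) :: t by
          rw [show alt 0 1 (2*c+1) = 0 :: alt 1 0 (2*c) from rfl, List.cons_prefix_cons]
          exact ⟨rfl, hcon⟩).isInfix)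
  · show pp c 1 t = (1 : Fin 3) :: t
    rw [pp_one, p1_of_ne]
    · intro hcon; exact hhd 1 hcon rfl
    · intro hcon
      exact h (alt 1 2 (2*c+1)) (by simp [Fw])
        ((show alt 1 2 (2*c+1) <+: (1 : Fin 3) :: t by
          rw [show alt 1 2 (2*c+1) = 1 :: alt 2 1 (2*c) from rfl, List.cons_prefix_cons]
          exact ⟨rfl, hcon⟩).isInfix)
  · show pp c 2 t = (2 : Fin 3) :: t
    rw [pp_two, p2_of_ne]
    intro hcon; exact hhd 2 hcon rfl

/-- the permutation of standard words given by prepending generator `i` -/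
def permP (c : ℕ) (hc : 1 ≤ c) (i : Fin 3) : Equiv.Perm {l : List (Fin 3) // Stdc c l} :=
  Function.Involutive.toPerm (fun w => ⟨pp c i w.1, stdc_pp hc i w.2⟩)
    (fun w => Subtype.ext (pp_invol hc i w.2))

lemma permP_apply {c : ℕ} (hc : 1 ≤ c) (i : Fin 3) (w : {l : List (Fin 3) // Stdc c l}) :
    (permP c hc i w).1 = pp c i w.1 := rfl

lemma permP_sq {c : ℕ} (hc : 1 ≤ c) (i : Fin 3) : permP c hc i * permP c hc i = 1 := by
  apply Equiv.ext
  intro w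
  show permP c hc i (permP c hc i w) = w
  exact Subtype.ext (pp_invol hc i w.2)

lemma permP_inv {c : ℕ} (hc : 1 ≤ c) (i : Fin 3) : (permP c hc i)⁻¹ = permP c hc i :=
  inv_eq_of_mul_eq_one_left (permP_sq hc i)

lemma iter_val {S : Type*} (f : S → S) (val : S → List (Fin 3))
    (g : List (Fin 3) → List (Fin 3)) (hfg : ∀ w, val (f w) = g (val w)) :
    ∀ (n : ℕ) (w : S), val (f^[n] w) = g^[n] (val w) := by
  intro n
  induction n with
  | zero => intro w; rfl
  | succ n ih =>
    intro w
    rw [Function.iterate_succ_apply, Function.iterate_succ_apply, ih, hfg]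

lemma permP_braid01 {c : ℕ} (hc : 1 ≤ c) :
    (permP c hc 0 * permP c hc 1) ^ (2*c+1) = 1 := by
  apply Equiv.ext
  intro w
  have h1 : ((permP c hc 0 * permP c hc 1) ^ (2*c+1)) w
      = (⇑(permP c hc 0 * permP c hc 1))^[2*c+1] w :=
    congrFun (Equiv.Perm.coe_pow _ _) w
  apply Subtype.ext
  rw [h1, iter_val (⇑(permP c hc 0 * permP c hc 1)) Subtype.val (u01 c)
    (fun w => rfl) (2*c+1) w]
  exact braid01 hc w.2

lemma permP_braid12 {c : ℕ} (hc : 1 ≤ c) :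
    (permP c hc 1 * permP c hc 2) ^ (2*c+1) = 1 := by
  apply Equiv.ext
  intro w
  have h1 : ((permP c hc 1 * permP c hc 2) ^ (2*c+1)) w
      = (⇑(permP c hc 1 * permP c hc 2))^[2*c+1] w :=
    congrFun (Equiv.Perm.coe_pow _ _) w
  apply Subtype.ext
  rw [h1, iter_val (⇑(permP c hc 1 * permP c hc 2)) Subtype.val (u12 c)
    (fun w => rfl) (2*c+1) w]
  exact braid12 hc w.2

section Assembly

variable {c : ℕ} (hc : 1 ≤ c) (rels : Set (FreeGroup (Fin 3)))
  (hrels : rels = {FreeGroup.of 0 ^ 2, FreeGroup.of 1 ^ 2, FreeGroup.of 2 ^ 2,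
      (FreeGroup.of 0 * FreeGroup.of 1) ^ (2*c+1),
      (FreeGroup.of 1 * FreeGroup.of 2) ^ (2*c+1)})

include hrels in
lemma mk_rel_one : ∀ w ∈ rels, PresentedGroup.mk rels w = 1 := by
  intro w hw
  exact (QuotientGroup.eq_one_iff w).mpr (Subgroup.subset_normalClosure hw)

include hrels in
lemma gen_sq (i : Fin 3) :
    PresentedGroup.of (rels := rels) i * PresentedGroup.of i = 1 := by
  have : PresentedGroup.of (rels := rels) i * PresentedGroup.of i
      = PresentedGroup.mk rels (FreeGroup.of i ^ 2) := by
    rw [map_pow, pow_two]; rfl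
  rw [this]
  apply mk_rel_one rels hrels
  fin_cases i <;> rw [hrels] <;> simp

include hrels in
lemma gen_braid01 :
    (PresentedGroup.of (rels := rels) 0 * PresentedGroup.of 1) ^ (2*c+1) = 1 := by
  have : (PresentedGroup.of (rels := rels) 0 * PresentedGroup.of 1) ^ (2*c+1)
      = PresentedGroup.mk rels ((FreeGroup.of 0 * FreeGroup.of 1) ^ (2*c+1)) := by
    rw [map_pow, map_mul]; rfl
  rw [this]
  apply mk_rel_one rels hrels
  rw [hrels]; simp

include hrels in
lemma gen_braid12 :
    (PresentedGroup.of (rels := rels) 1 * PresentedGroup.of 2) ^ (2*c+1) = 1 := by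
  have : (PresentedGroup.of (rels := rels) 1 * PresentedGroup.of 2) ^ (2*c+1)
      = PresentedGroup.mk rels ((FreeGroup.of 1 * FreeGroup.of 2) ^ (2*c+1)) := by
    rw [map_pow, map_mul]; rfl
  rw [this]
  apply mk_rel_one rels hrels
  rw [hrels]; simp

include hc hrels in
lemma lift_rels : ∀ w ∈ rels, FreeGroup.lift (permP c hc) w = 1 := by
  intro w hw
  rw [hrels] at hw
  simp only [Set.mem_insert_iff, Set.mem_singleton_iff] at hw
  rcases hw with rfl | rfl | rfl | rfl | rfl
  · rw [map_pow, FreeGroup.lift_apply_of, pow_two, permP_sq]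
  · rw [map_pow, FreeGroup.lift_apply_of, pow_two, permP_sq]
  · rw [map_pow, FreeGroup.lift_apply_of, pow_two, permP_sq]
  · rw [map_pow, map_mul, FreeGroup.lift_apply_of, FreeGroup.lift_apply_of, permP_braid01]
  · rw [map_pow, map_mul, FreeGroup.lift_apply_of, FreeGroup.lift_apply_of, permP_braid12]

include hc hrels in
theorem main_bijective :
    Function.Bijective (fun w : {l : List (Fin 3) // Stdc c l} =>
      (w.1.map (fun i => PresentedGroup.of (rels := rels) i)).prod) := by
  set g : Fin 3 → PresentedGroup rels := fun i => PresentedGroup.of i with hgdef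
  show Function.Bijective (fun w : {l : List (Fin 3) // Stdc c l} => tog g w.1)
  have hg : ∀ i, g i * g i = 1 := fun i => gen_sq rels hrels i
  have h01 : (g 0 * g 1)^(2*c+1) = 1 := gen_braid01 rels hrels
  have h12 : (g 1 * g 2)^(2*c+1) = 1 := gen_braid12 rels hrels
  have htogpp : ∀ (i : Fin 3) (l : List (Fin 3)), tog g (pp c i l) = g i * tog g l := by
    intro i l
    fin_cases i
    · exact tog_p0 g hc hg h01 h12 l
    · exact tog_p1 g hc hg h12 l
    · exact tog_p2 g (hg 2) l
  set ψ := PresentedGroup.toGroup (lift_rels hc rels hrels) with hψ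
  have hψof : ∀ i : Fin 3, ψ (PresentedGroup.of i) = permP c hc i :=
    fun i => PresentedGroup.toGroup.of _
  set w0 : {l : List (Fin 3) // Stdc c l} := ⟨[], stdc_nil c⟩ with hw0
  -- injectivity
  have heval : ∀ (l : List (Fin 3)) (hstd : Stdc c l), ψ (tog g l) w0 = ⟨l, hstd⟩ := by
    intro l
    induction l with
    | nil => intro hstd; rw [show tog g [] = 1 from rfl, map_one]; rfl
    | cons i t ih =>
      intro hstd
      have htstd : Stdc c t := by
        have := hstd.tail
        simpa using this
      rw [tog_cons, map_mul]
      have : ψ (tog g t) w0 = ⟨t, htstd⟩ := ih htstd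
      rw [Equiv.Perm.mul_apply, this, hψof i]
      exact Subtype.ext (pp_cons hc i hstd)
  have hinj : Function.Injective (fun w : {l : List (Fin 3) // Stdc c l} => tog g w.1) := by
    intro w w' hww
    have hww' : tog g w.1 = tog g w'.1 := hww
    have h1 := heval w.1 w.2
    have h2 := heval w'.1 w'.2
    rw [hww'] at h1
    rw [h1] at h2
    exact Subtype.ext (congrArg Subtype.val h2 : w.1 = w'.1)
  -- surjectivity
  have hkey : ∀ (x : FreeGroup (Fin 3)) (w : {l : List (Fin 3) // Stdc c l}),
      tog g (ψ (PresentedGroup.mk rels x) w).1 = PresentedGroup.mk rels x * tog g w.1 := by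
    intro x
    induction x using FreeGroup.induction_on with
    | C1 => intro w; rw [map_one, map_one, one_mul]; rfl
    | of i =>
      intro w
      have hmk : PresentedGroup.mk rels (FreeGroup.of i) = PresentedGroup.of i := rfl
      rw [hmk, hψof i]
      exact htogpp i w.1
    | inv_of i ih =>
      intro w
      rw [map_inv, map_inv]
      have hmk : PresentedGroup.mk rels (FreeGroup.of i) = PresentedGroup.of i := rfl
      rw [hmk, hψof i, permP_inv hc i]
      have h2 : (PresentedGroup.of (rels := rels) i)⁻¹ = PresentedGroup.of i :=
        inv_eq_of_mul_eq_one_left (hg i)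
      rw [h2]
      exact htogpp i w.1
    | mul x y ihx ihy =>
      intro w
      rw [map_mul, map_mul, Equiv.Perm.mul_apply, ihx, ihy, mul_assoc]
  have hsurj : Function.Surjective (fun w : {l : List (Fin 3) // Stdc c l} => tog g w.1) := by
    intro gg
    obtain ⟨x, rfl⟩ := PresentedGroup.mk_surjective rels gg
    refine ⟨ψ (PresentedGroup.mk rels x) w0, ?_⟩
    have := hkey x w0
    rw [show tog g w0.1 = 1 from rfl, mul_one] at this
    exact this
  exact ⟨hinj, hsurj⟩

end Assembly

lemma repl_alt (x y : Fin 3) : ∀ n : ℕ,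
    (List.replicate n ([x, y] : List (Fin 3))).flatten ++ [x] = alt x y (2*n+1) := by
  intro n
  induction n with
  | zero => rfl
  | succ n ih =>
    rw [List.replicate_succ, List.flatten_cons, List.append_assoc, ih,
      show 2*(n+1)+1 = (2*n+1)+2 by omega, alt_two]
    rfl

end GSB16

/-- Gröbner–Shirshov basis for `W(2k-1)` (in the sense that the `S`-standard
monomials — words avoiding the leading words of the relations as subwords —
form a linear basis of the group algebra). -/
theorem stmt_16 (k : ℕ) (hk : 2 ≤ k)
    (rels : Set (FreeGroup (Fin 3)))
    (hrels : rels = {FreeGroup.of 0 ^ 2, FreeGroup.of 1 ^ 2, FreeGroup.of 2 ^ 2,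
      (FreeGroup.of 0 * FreeGroup.of 1) ^ (2 * k - 1),
      (FreeGroup.of 1 * FreeGroup.of 2) ^ (2 * k - 1)})
    (Std : List (Fin 3) → Prop)
    (hStd : ∀ l : List (Fin 3), Std l ↔
      ∀ u ∈ ([[0, 0], [1, 1], [2, 2],
          (List.replicate (k - 1) ([0, 1] : List (Fin 3))).flatten ++ [0],
          (List.replicate (k - 1) ([1, 2] : List (Fin 3))).flatten ++ [1]] :
          List (List (Fin 3))), ¬ u <:+: l) :
    ∃ B : Module.Basis {l : List (Fin 3) // Std l} ℚ (MonoidAlgebra ℚ (PresentedGroup rels)),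
      ∀ w : {l : List (Fin 3) // Std l},
        B w = MonoidAlgebra.of ℚ (PresentedGroup rels)
          ((w.1.map (fun i => PresentedGroup.of (rels := rels) i)).prod) := by
  obtain ⟨c, hc1, hkc⟩ : ∃ c, 1 ≤ c ∧ k - 1 = c := ⟨k - 1, by omega, rfl⟩
  rw [show (2 * k - 1) = 2*c+1 by omega] at hrels
  have hstd_iff : ∀ l, Std l ↔ GSB16.Stdc c l := by
    intro l
    rw [hStd l, hkc, GSB16.repl_alt 0 1 c, GSB16.repl_alt 1 2 c]
    exact Iff.rfl
  have hbij := GSB16.main_bijective (c := c) hc1 rels hrels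
  let e : {l : List (Fin 3) // GSB16.Stdc c l} ≃ PresentedGroup rels :=
    Equiv.ofBijective _ hbij
  let e0 : {l : List (Fin 3) // Std l} ≃ {l : List (Fin 3) // GSB16.Stdc c l} :=
    Equiv.subtypeEquivRight hstd_iff
  refine ⟨((MonoidAlgebra.basis (PresentedGroup rels) ℚ :
      Module.Basis (PresentedGroup rels) ℚ (MonoidAlgebra ℚ (PresentedGroup rels))).reindex
      (e0.trans e).symm), ?_⟩
  intro w
  have hra := Module.Basis.reindex_apply (MonoidAlgebra.basis (PresentedGroup rels) ℚ :
      Module.Basis (PresentedGroup rels) ℚ (MonoidAlgebra ℚ (PresentedGroup rels)))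
      (e0.trans e).symm w
  refine hra.trans ?_
  rw [Equiv.symm_symm]
  have hb : (MonoidAlgebra.basis (PresentedGroup rels) ℚ :
      Module.Basis (PresentedGroup rels) ℚ (MonoidAlgebra ℚ (PresentedGroup rels))) ((e0.trans e) w)
      = MonoidAlgebra.single ((e0.trans e) w) (1 : ℚ) := MonoidAlgebra.basis_apply _ _
  refine hb.trans ?_
  have he : (e0.trans e) w = (w.1.map (fun i => PresentedGroup.of (rels := rels) i)).prod := rfl
  rw [he, MonoidAlgebra.of_apply]
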